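/- arXiv:1707.05824 — 6 statements merged into one kernel-verified Lean document; each statement's English description precedes it below -/
import Mathlib

section
/- For every real number r ≥ 0 and every ε with 0 < ε < 1, the function χ defined by χ(r) = (1 - ln r)·r for 0 < r < 1 and χ(r) = 1 for r ≥ 1 (with χ(0) = 0) satisfies χ(r) ≤ (-ln ε)·r + ε. -/
noncomputable def chi (r : ℝ) : ℝ := if r < 1 then (1 - Real.log r) * r else 1

theorem stmt0 (r : ℝ) (hr : 0 ≤ r) (ε : ℝ) (hε0 : 0 < ε) (hε1 : ε < 1) :
    chi r ≤ (-Real.log ε) * r + ε := by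
  unfold chi
  split_ifs with h1
  · rcases eq_or_lt_of_le hr with heq | hrpos
    · simp [← heq]; positivity
    · have hεr : 0 < ε / r := by positivity
      have hlog : Real.log (ε / r) ≤ ε / r - 1 := Real.log_le_sub_one_of_pos hεr
      have hlogdiv : Real.log (ε / r) = Real.log ε - Real.log r :=
        Real.log_div (ne_of_gt hε0) (ne_of_gt hrpos)
      have key : r * (1 + (Real.log ε - Real.log r)) ≤ ε := by
        calc r * (1 + (Real.log ε - Real.log r)) ≤ r * (ε / r) := by
              apply mul_le_mul_of_nonneg_left _ hr
              rw [← hlogdiv]; linarith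
          _ = ε := by field_simp
      nlinarith [key]
  · push_neg at h1
    have hlog : Real.log ε ≤ ε - 1 := Real.log_le_sub_one_of_pos hε0
    have hneg : 0 < -Real.log ε := by
      have := Real.log_neg hε0 hε1; linarith
    nlinarith [mul_le_mul_of_nonneg_left h1 hneg.le]
end

section
/- Let ξ, η ∈ ℝ² with δ = |ξ - η| > 0, and let R ≥ 2δ be such that the domain M ⊆ ℝ² is contained in the ball B(ξ, R). Then ∫_M | 1/|y-ξ| − 1/|y-η| | dy ≤ C(n)·(1 + ln R − ln δ)·δ for an absolute constant C, i.e., the integral is bounded by a constant multiple of (1 − ln δ)·δ plus (ln R)·δ. -/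
open MeasureTheory Measure Metric Set

lemma vol_unit_ball :
    ((volume : Measure (EuclideanSpace ℝ (Fin 2))) (ball 0 1)).toReal = Real.pi := by
  rw [EuclideanSpace.volume_ball]
  have h2 : ((Fintype.card (Fin 2)) : ℝ) / 2 + 1 = 2 := by simp; norm_num
  rw [h2, Real.Gamma_two]
  simp [Real.sq_sqrt Real.pi_nonneg, ENNReal.toReal_ofReal Real.pi_nonneg]

lemma radial2 (f : ℝ → ℝ) :
    ∫ x : EuclideanSpace ℝ (Fin 2), f ‖x‖ = 2 * Real.pi * ∫ y in Ioi (0:ℝ), y * f y := by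
  rw [MeasureTheory.integral_fun_norm_addHaar volume f]
  rw [finrank_euclideanSpace_fin, measureReal_def, vol_unit_ball]
  simp [smul_eq_mul, mul_assoc]


lemma integrable_fun_norm2 {f : ℝ → ℝ} (hf : Measurable f)
    (h : IntegrableOn (fun y : ℝ => y * f y) (Set.Ioi 0)) :
    Integrable (fun x : EuclideanSpace ℝ (Fin 2) => f ‖x‖) := by
  set E := EuclideanSpace ℝ (Fin 2)
  set μ : Measure E := volume with hμ
  have hdim : Module.finrank ℝ E = 2 := finrank_euclideanSpace_fin
  rw [← restrict_compl_singleton (μ := μ) (0 : E)]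
  show Integrable _ (μ.restrict {(0:E)}ᶜ)
  rw [← map_comap_subtype_coe (measurableSet_singleton (0:E)).compl,
    (MeasurableEmbedding.subtype_coe (measurableSet_singleton (0:E)).compl).integrable_map_iff]
  have hmp := μ.measurePreserving_homeomorphUnitSphereProd
  rw [show ((fun x : E => f ‖x‖) ∘ Subtype.val)
      = (f ∘ Subtype.val ∘ Prod.snd) ∘ (homeomorphUnitSphereProd E) by
    funext x; simp]
  rw [hmp.integrable_comp_emb (Homeomorph.measurableEmbedding _)]
  have h2 : Integrable (f ∘ Subtype.val) (volumeIoiPow (Module.finrank ℝ E - 1)) := by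
    have hdens : (volumeIoiPow (Module.finrank ℝ E - 1))
        = (Measure.comap Subtype.val volume).withDensity
          (fun r : Ioi (0:ℝ) => ((r.1 ^ (Module.finrank ℝ E - 1)).toNNReal : ENNReal)) := rfl
    rw [hdens, integrable_withDensity_iff_integrable_smul
      ((measurable_subtype_coe.pow_const _).real_toNNReal)]
    have key : Integrable ((fun y : ℝ => y * f y) ∘ (Subtype.val : Ioi (0:ℝ) → ℝ))
        (Measure.comap Subtype.val volume) := by
      rw [← (MeasurableEmbedding.subtype_coe measurableSet_Ioi).integrable_map_iff,
        map_comap_subtype_coe measurableSet_Ioi]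
      exact h
    refine key.congr (Filter.Eventually.of_forall fun r => ?_)
    simp [Function.comp, NNReal.smul_def, hdim, pow_one, smul_eq_mul,
      Real.coe_toNNReal _ r.2.le]
  have hmap : Integrable (f ∘ Subtype.val)
      ((μ.toSphere.prod (volumeIoiPow (Module.finrank ℝ E - 1))).map Prod.snd) := by
    rw [Measure.map_snd_prod]
    exact h2.smul_measure (measure_ne_top _ _)
  exact hmap.comp_measurable measurable_snd


section
variable (c : EuclideanSpace ℝ (Fin 2)) {r : ℝ}

private noncomputable def fb (r : ℝ) : ℝ → ℝ := fun t => if t < r then 1/t else 0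

lemma fb_meas : Measurable (fb r) := by
  unfold fb
  exact Measurable.ite measurableSet_Iio
    (measurable_const.div (measurable_id : Measurable (fun t : ℝ => t))) measurable_const

lemma fb_ind (x : EuclideanSpace ℝ (Fin 2)) :
    indicator (ball c r) (fun y => 1 / dist y c) x = fb r ‖x - c‖ := by
  by_cases hx : dist x c < r <;>
    simp [Set.indicator, fb, mem_ball, hx, dist_eq_norm] at *

lemma fb_one_dim :
    ∀ y ∈ Ioi (0:ℝ), y * fb r y = indicator (Ioo 0 r) (fun _ => (1:ℝ)) y := by
  intro y hy
  rw [mem_Ioi] at hy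
  by_cases h : y < r <;>
    simp [fb, Set.indicator, h, hy, mem_Ioo, mul_one_div, div_self hy.ne', mul_inv_cancel₀ hy.ne']

lemma fb_integrableOn : IntegrableOn (fun y : ℝ => y * fb r y) (Ioi 0) := by
  have : IntegrableOn (indicator (Ioo 0 r) (fun _ => (1:ℝ))) (Ioi 0) := by
    refine Integrable.integrableOn ?_
    rw [integrable_indicator_iff measurableSet_Ioo]
    exact integrableOn_const measure_Ioo_lt_top.ne
  exact this.congr_fun (fun y hy => (fb_one_dim y hy).symm) measurableSet_Ioi
lemma ball_integrableOn : IntegrableOn (fun y => 1 / dist y c) (ball c r) := by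
  rw [← integrable_indicator_iff (μ := volume) measurableSet_ball]
  have h0 : Integrable (fun x : EuclideanSpace ℝ (Fin 2) => fb r ‖x‖) :=
    integrable_fun_norm2 fb_meas fb_integrableOn
  have := h0.comp_sub_right c
  exact this.congr (Filter.Eventually.of_forall fun x => (fb_ind c x).symm)

lemma ball_integral (hr : 0 ≤ r) :
    ∫ y in ball c r, 1 / dist y c = 2 * Real.pi * r := by
  rw [← integral_indicator measurableSet_ball]
  calc ∫ x, indicator (ball c r) (fun y => 1 / dist y c) x
      = ∫ x : EuclideanSpace ℝ (Fin 2), fb r ‖x - c‖ := by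
        exact integral_congr_ae (Filter.Eventually.of_forall fun x => fb_ind c x)
    _ = ∫ x : EuclideanSpace ℝ (Fin 2), fb r ‖x‖ :=
        integral_sub_right_eq_self (fun x => fb r ‖x‖) c
    _ = 2 * Real.pi * ∫ y in Ioi (0:ℝ), y * fb r y := radial2 _
    _ = 2 * Real.pi * r := by
        rw [setIntegral_congr_fun measurableSet_Ioi fb_one_dim,
          setIntegral_indicator measurableSet_Ioo,
          inter_eq_self_of_subset_right Ioo_subset_Ioi_self]
        simp [Real.volume_Ioo, ENNReal.toReal_ofReal hr, hr]
end

section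
variable (c : EuclideanSpace ℝ (Fin 2)) {a R : ℝ}

private noncomputable def fa (a R : ℝ) : ℝ → ℝ :=
  fun t => if a ≤ t ∧ t < R then 1 / (t * t) else 0

lemma fa_ind (x : EuclideanSpace ℝ (Fin 2)) :
    indicator (ball c R \ ball c a) (fun y => 1 / (dist y c * dist y c)) x
      = fa a R ‖x - c‖ := by
  have hmem : x ∈ ball c R \ ball c a ↔ (a ≤ ‖x - c‖ ∧ ‖x - c‖ < R) := by
    simp [mem_diff, mem_ball, dist_eq_norm, not_lt, and_comm]
  by_cases hx : a ≤ ‖x - c‖ ∧ ‖x - c‖ < R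
  · rw [Set.indicator_of_mem (hmem.mpr hx)]
    simp [fa, hx, dist_eq_norm]
  · rw [Set.indicator_of_notMem (fun hmm => hx (hmem.mp hmm))]
    simp [fa, hx]

lemma fa_one_dim (ha : 0 < a) :
    ∀ y ∈ Ioi (0:ℝ), y * fa a R y = indicator (Ico a R) (fun t => t⁻¹) y := by
  intro y hy
  rw [mem_Ioi] at hy
  by_cases h : a ≤ y ∧ y < R <;>
    simp [fa, Set.indicator, h, mem_Ico]
  field_simp

lemma fa_integral (ha : 0 < a) (haR : a ≤ R) :
    ∫ y in ball c R \ ball c a, 1 / (dist y c * dist y c)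
      = 2 * Real.pi * (Real.log R - Real.log a) := by
  rw [← integral_indicator (measurableSet_ball.diff measurableSet_ball)]
  calc ∫ x, indicator (ball c R \ ball c a) (fun y => 1 / (dist y c * dist y c)) x
      = ∫ x : EuclideanSpace ℝ (Fin 2), fa a R ‖x - c‖ :=
        integral_congr_ae (Filter.Eventually.of_forall fun x => fa_ind c x)
    _ = ∫ x : EuclideanSpace ℝ (Fin 2), fa a R ‖x‖ :=
        integral_sub_right_eq_self (fun x => fa a R ‖x‖) c
    _ = 2 * Real.pi * ∫ y in Ioi (0:ℝ), y * fa a R y := radial2 _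
    _ = 2 * Real.pi * (Real.log R - Real.log a) := by
        rw [setIntegral_congr_fun measurableSet_Ioi (fa_one_dim ha),
          setIntegral_indicator measurableSet_Ico,
          inter_eq_self_of_subset_right (fun y (hy : y ∈ Ico a R) =>
            mem_Ioi.mpr (lt_of_lt_of_le ha hy.1)),
          setIntegral_congr_set Ico_ae_eq_Ioc, ← intervalIntegral.integral_of_le haR,
          integral_inv (by rw [Set.uIcc_of_le haR]; rintro ⟨h0, -⟩; exact ha.not_ge h0),
          Real.log_div (ne_of_gt (lt_of_lt_of_le ha haR)) (ne_of_gt ha)]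

lemma fa_integrableOn (ha : 0 < a) :
    IntegrableOn (fun y => 1 / (dist y c * dist y c)) (ball c R \ ball c a) := by
  refine Measure.integrableOn_of_bounded (M := 1 / (a * a)) ?_ ?_ ?_
  · exact ne_of_lt (lt_of_le_of_lt (measure_mono diff_subset) measure_ball_lt_top)
  · refine (Measurable.aestronglyMeasurable ?_)
    exact measurable_const.div ((measurable_dist.comp (measurable_id.prodMk measurable_const)).mul
      (measurable_dist.comp (measurable_id.prodMk measurable_const)))
  · filter_upwards [MeasureTheory.ae_restrict_mem (measurableSet_ball.diff measurableSet_ball)]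
      with y hy
    have h1 : a ≤ dist y c := by
      have := hy.2; simpa [mem_ball, not_lt] using this
    have h2 : 0 < dist y c := lt_of_lt_of_le ha h1
    rw [Real.norm_eq_abs, abs_of_nonneg (by positivity)]
    have : a * a ≤ dist y c * dist y c := mul_le_mul h1 h1 ha.le h2.le
    exact one_div_le_one_div_of_le (by positivity) this
end

theorem stmt10 :
    ∃ C > 0, ∀ (M : Set (EuclideanSpace ℝ (Fin 2))) (ξ η : EuclideanSpace ℝ (Fin 2)) (R : ℝ),
      MeasurableSet M → Bornology.IsBounded M → ξ ∈ M → η ∈ M →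
      0 < dist ξ η → dist ξ η < 1 → 2 * dist ξ η ≤ R → M ⊆ Metric.ball ξ R →
      (∫ y in M, |1 / dist y ξ - 1 / dist y η|) ≤
        C * (1 + Real.log R - Real.log (dist ξ η)) * dist ξ η := by
  refine ⟨10 * Real.pi, by positivity, ?_⟩
  intro M ξ η R hM hMb hξ hη hδpos hδ1 hR hMR
  set δ := dist ξ η with hδ
  have hRpos : 0 < R := lt_of_lt_of_le (by linarith) hR
  -- integrability on M
  have hint_ξ : IntegrableOn (fun y => 1 / dist y ξ) M :=
    (ball_integrableOn ξ (r := R)).mono_set hMR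
  have hMη : M ⊆ ball η (2 * R) := by
    intro y hy
    have h1 := mem_ball.mp (hMR hy)
    have h2 : dist y η ≤ dist y ξ + dist ξ η := dist_triangle y ξ η
    rw [mem_ball]
    have : dist ξ η ≤ R := by linarith [hδpos]
    linarith
  have hint_η : IntegrableOn (fun y => 1 / dist y η) M :=
    (ball_integrableOn η (r := 2 * R)).mono_set hMη
  have hint : IntegrableOn (fun y => |1 / dist y ξ - 1 / dist y η|) M :=
    (hint_ξ.sub hint_η).abs
  -- the splitting
  have hsplit := integral_inter_add_diff (t := ball ξ (2 * δ)) (s := M)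
      (f := fun y => |1 / dist y ξ - 1 / dist y η|) measurableSet_ball hint
  -- Part 1 : near the singularities
  have hnonneg_ξ : ∀ y : EuclideanSpace ℝ (Fin 2), 0 ≤ 1 / dist y ξ := fun y => by positivity
  have hnonneg_η : ∀ y : EuclideanSpace ℝ (Fin 2), 0 ≤ 1 / dist y η := fun y => by positivity
  have part1 : (∫ y in M ∩ ball ξ (2 * δ), |1 / dist y ξ - 1 / dist y η|)
      ≤ 10 * Real.pi * δ := by
    have hintBξ : IntegrableOn (fun y => 1 / dist y ξ) (M ∩ ball ξ (2 * δ)) :=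
      ((ball_integrableOn ξ (r := 2 * δ))).mono_set inter_subset_right
    have hsub_η : M ∩ ball ξ (2 * δ) ⊆ ball η (3 * δ) := by
      rintro y ⟨-, hy⟩
      rw [mem_ball] at *
      calc dist y η ≤ dist y ξ + dist ξ η := dist_triangle y ξ η
        _ < 2 * δ + δ := by linarith
        _ = 3 * δ := by ring
    have hintBη : IntegrableOn (fun y => 1 / dist y η) (M ∩ ball ξ (2 * δ)) :=
      ((ball_integrableOn η (r := 3 * δ))).mono_set hsub_η
    calc (∫ y in M ∩ ball ξ (2 * δ), |1 / dist y ξ - 1 / dist y η|)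
        ≤ ∫ y in M ∩ ball ξ (2 * δ), (1 / dist y ξ + 1 / dist y η) := by
          refine setIntegral_mono_on (hint.mono_set inter_subset_left)
            (hintBξ.add hintBη) (hM.inter measurableSet_ball) (fun y _ => ?_)
          refine (abs_sub _ _).trans ?_
          rw [abs_of_nonneg (hnonneg_ξ y), abs_of_nonneg (hnonneg_η y)]
      _ = (∫ y in M ∩ ball ξ (2 * δ), 1 / dist y ξ)
            + ∫ y in M ∩ ball ξ (2 * δ), 1 / dist y η := integral_add hintBξ hintBη
      _ ≤ (∫ y in ball ξ (2 * δ), 1 / dist y ξ) + ∫ y in ball η (3 * δ), 1 / dist y η := by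
          refine add_le_add ?_ ?_
          · exact setIntegral_mono_set (ball_integrableOn ξ)
              (Filter.Eventually.of_forall fun y => hnonneg_ξ y)
              (HasSubset.Subset.eventuallyLE inter_subset_right)
          · exact setIntegral_mono_set (ball_integrableOn η)
              (Filter.Eventually.of_forall fun y => hnonneg_η y)
              (HasSubset.Subset.eventuallyLE hsub_η)
      _ = 2 * Real.pi * (2 * δ) + 2 * Real.pi * (3 * δ) := by
          rw [ball_integral ξ (by positivity), ball_integral η (by positivity)]
      _ = 10 * Real.pi * δ := by ring
  -- Part 2 : away from the singularities
  have part2 : (∫ y in M \ ball ξ (2 * δ), |1 / dist y ξ - 1 / dist y η|)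
      ≤ 2 * δ * (2 * Real.pi * (Real.log R - Real.log (2 * δ))) := by
    have hsubA : M \ ball ξ (2 * δ) ⊆ ball ξ R \ ball ξ (2 * δ) :=
      fun y hy => ⟨hMR hy.1, hy.2⟩
    have hintA : IntegrableOn (fun y => 2 * δ * (1 / (dist y ξ * dist y ξ)))
        (ball ξ R \ ball ξ (2 * δ)) :=
      ((fa_integrableOn ξ (a := 2 * δ) (R := R) (by positivity)).const_mul (2 * δ))
    have hptwise : ∀ y ∈ M \ ball ξ (2 * δ),
        |1 / dist y ξ - 1 / dist y η| ≤ 2 * δ * (1 / (dist y ξ * dist y ξ)) := by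
      rintro y ⟨hyM, hyB⟩
      have ha : 2 * δ ≤ dist y ξ := by simpa [mem_ball, not_lt] using hyB
      have hapos : 0 < dist y ξ := lt_of_lt_of_le (by positivity) ha
      have hdd : |dist y ξ - dist y η| ≤ δ := by
        have h := abs_dist_sub_le ξ η y
        rwa [dist_comm ξ y, dist_comm η y] at h
      have hbpos : 0 < dist y η := by
        have := abs_le.mp hdd
        nlinarith [this.1, this.2]
      have hb2 : dist y ξ / 2 ≤ dist y η := by
        have := (abs_le.mp hdd).2
        nlinarith
      rw [div_sub_div _ _ hapos.ne' hbpos.ne', abs_div,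
        abs_of_pos (by positivity : (0:ℝ) < dist y ξ * dist y η)]
      rw [div_le_iff₀ (by positivity)]
      calc |1 * dist y η - dist y ξ * 1| = |dist y η - dist y ξ| := by ring_nf
        _ ≤ δ := by rwa [abs_sub_comm] at hdd
        _ ≤ 2 * δ * (1 / (dist y ξ * dist y ξ)) * (dist y ξ * dist y η) := by
          rw [show 2 * δ * (1 / (dist y ξ * dist y ξ)) * (dist y ξ * dist y η)
              = 2 * δ * dist y η / dist y ξ by field_simp,
            le_div_iff₀ hapos]
          nlinarith
    calc (∫ y in M \ ball ξ (2 * δ), |1 / dist y ξ - 1 / dist y η|)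
        ≤ ∫ y in M \ ball ξ (2 * δ), 2 * δ * (1 / (dist y ξ * dist y ξ)) :=
          setIntegral_mono_on (hint.mono_set diff_subset) (hintA.mono_set hsubA)
            (hM.diff measurableSet_ball) hptwise
      _ ≤ ∫ y in ball ξ R \ ball ξ (2 * δ), 2 * δ * (1 / (dist y ξ * dist y ξ)) := by
          refine setIntegral_mono_set hintA
            (Filter.Eventually.of_forall fun y => by positivity)
            (HasSubset.Subset.eventuallyLE hsubA)
      _ = 2 * δ * (2 * Real.pi * (Real.log R - Real.log (2 * δ))) := by
          rw [integral_const_mul, fa_integral ξ (by positivity) hR]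
  -- put things together
  have hlog2δ : Real.log δ ≤ Real.log (2 * δ) :=
    Real.log_le_log hδpos (by linarith)
  have hlogRδ : Real.log δ ≤ Real.log R :=
    Real.log_le_log hδpos (by linarith)
  have hfinal : (∫ y in M, |1 / dist y ξ - 1 / dist y η|)
      ≤ 10 * Real.pi * δ + 4 * Real.pi * (Real.log R - Real.log δ) * δ := by
    rw [← hsplit]
    have h2 : 2 * δ * (2 * Real.pi * (Real.log R - Real.log (2 * δ)))
        ≤ 4 * Real.pi * (Real.log R - Real.log δ) * δ := by
      have hsub : Real.log R - Real.log (2 * δ) ≤ Real.log R - Real.log δ := by linarith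
      calc 2 * δ * (2 * Real.pi * (Real.log R - Real.log (2 * δ)))
          = 4 * Real.pi * (Real.log R - Real.log (2 * δ)) * δ := by ring
        _ ≤ 4 * Real.pi * (Real.log R - Real.log δ) * δ :=
          mul_le_mul_of_nonneg_right
            (mul_le_mul_of_nonneg_left hsub (by positivity)) hδpos.le
    linarith [part1, part2]
  refine hfinal.trans ?_
  have hL : 0 ≤ Real.log R - Real.log δ := by linarith
  have hmono : 4 * Real.pi * (Real.log R - Real.log δ) * δ
      ≤ 10 * Real.pi * (Real.log R - Real.log δ) * δ := by
    refine mul_le_mul_of_nonneg_right (mul_le_mul_of_nonneg_right ?_ hL) hδpos.le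
    linarith [Real.pi_pos]
  have expand : 10 * Real.pi * (1 + Real.log R - Real.log δ) * δ
      = 10 * Real.pi * δ + 10 * Real.pi * (Real.log R - Real.log δ) * δ := by ring
  linarith [hmono, expand]
end

section
/- Osgood uniqueness with log-Lipschitz modulus: suppose a nonnegative continuous function ρ : [0, T] → ℝ satisfies ρ(t) ≤ (−C ln ε) ∫₀ᵗ ρ(s) ds + C ε t for every ε ∈ (0, 1) and every t ∈ [0, T], where C > 0. Then ρ ≡ 0 on [0, min(T, 1/(2C))]; in fact by iteration ρ ≡ 0 on all of [0, T]. -/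
theorem stmt12 (T C : ℝ) (hT : 0 ≤ T) (hC : 0 < C) (ρ : ℝ → ℝ)
    (hcont : ContinuousOn ρ (Set.Icc 0 T)) (hnonneg : ∀ t ∈ Set.Icc 0 T, 0 ≤ ρ t)
    (hineq : ∀ ε : ℝ, 0 < ε → ε < 1 → ∀ t ∈ Set.Icc 0 T,
      ρ t ≤ (-C * Real.log ε) * (∫ s in (0:ℝ)..t, ρ s) + C * ε * t) :
    ∀ t ∈ Set.Icc 0 T, ρ t = 0 := by
  -- continuous extension of ρ to all of ℝ
  set ρt : ℝ → ℝ := fun x => ρ (max 0 (min x T)) with hρt_def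
  have hproj : ∀ x : ℝ, max 0 (min x T) ∈ Set.Icc (0:ℝ) T := by
    intro x
    exact ⟨le_max_left _ _, max_le hT (min_le_right _ _)⟩
  have hρt_cont : Continuous ρt := by
    apply hcont.comp_continuous
    · exact continuous_const.max (continuous_id.min continuous_const)
    · exact hproj
  have heq : ∀ x ∈ Set.Icc (0:ℝ) T, ρt x = ρ x := by
    intro x hx
    simp only [hρt_def, min_eq_left hx.2, max_eq_right hx.1]
  have hint : ∀ b c : ℝ, IntervalIntegrable ρt MeasureTheory.volume b c :=
    fun b c => hρt_cont.intervalIntegrable b c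
  -- ρ 0 = 0
  have h00 : ρ 0 = 0 := by
    have h := hineq (1/2) (by norm_num) (by norm_num) 0 ⟨le_refl _, hT⟩
    simp only [intervalIntegral.integral_same, mul_zero, add_zero] at h
    exact le_antisymm h (hnonneg 0 ⟨le_refl _, hT⟩)
  -- Key step: propagate vanishing by 1/(2C)
  have key : ∀ a : ℝ, 0 ≤ a → a ≤ T → (∀ s, 0 ≤ s → s ≤ a → ρ s = 0) →
      ∀ t, a ≤ t → t ≤ T → t - a ≤ 1/(2*C) → ρ t = 0 := by
    intro a ha0 haT hzero t hat htT hlen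
    have ht0 : 0 ≤ t := ha0.trans hat
    have hbound : ∀ ε : ℝ, 0 < ε → ε < 1 → ρ t ≤ C * T * Real.sqrt ε := by
      intro ε hε0 hε1
      set K : ℝ := -C * Real.log ε with hK_def
      have hlogneg : Real.log ε < 0 := Real.log_neg hε0 hε1
      have hK : 0 < K := by
        rw [hK_def]; nlinarith
      set g : ℝ → ℝ := fun x => ∫ s in a..x, ρt s with hg_def
      have hg' : ∀ x : ℝ, HasDerivAt g (ρt x) x := fun x =>
        (hρt_cont.integral_hasStrictDerivAt a x).hasDerivAt
      have hgcont : Continuous g :=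
        continuous_iff_continuousAt.2 fun x => (hg' x).continuousAt
      -- relate ∫₀ˣ ρ to g x for x ∈ [a, T]
      have hrel : ∀ x, a ≤ x → x ≤ T → (∫ s in (0:ℝ)..x, ρ s) = g x := by
        intro x hax hxT
        have hx0 : (0:ℝ) ≤ x := ha0.trans hax
        have e1 : (∫ s in (0:ℝ)..x, ρ s) = ∫ s in (0:ℝ)..x, ρt s := by
          apply intervalIntegral.integral_congr
          intro s hs
          rw [Set.uIcc_of_le hx0] at hs
          exact (heq s ⟨hs.1, hs.2.trans hxT⟩).symm
        have e2 : (∫ s in (0:ℝ)..x, ρt s)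
            = (∫ s in (0:ℝ)..a, ρt s) + ∫ s in a..x, ρt s :=
          (intervalIntegral.integral_add_adjacent_intervals (hint 0 a) (hint a x)).symm
        have e3 : (∫ s in (0:ℝ)..a, ρt s) = 0 := by
          have : (∫ s in (0:ℝ)..a, ρt s) = ∫ s in (0:ℝ)..a, (0:ℝ) := by
            apply intervalIntegral.integral_congr
            intro s hs
            rw [Set.uIcc_of_le ha0] at hs
            rw [heq s ⟨hs.1, hs.2.trans haT⟩]
            exact hzero s hs.1 hs.2
          simp [this]
        rw [e1, e2, e3, zero_add]
      -- the pointwise bound used in Gronwall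
      have hstep : ∀ x, a ≤ x → x ≤ T → ρ x ≤ K * ‖g x‖ + C * ε * T := by
        intro x hax hxT
        have hx0 : (0:ℝ) ≤ x := ha0.trans hax
        have h1 := hineq ε hε0 hε1 x ⟨hx0, hxT⟩
        rw [hrel x hax hxT] at h1
        have h2 : K * g x ≤ K * ‖g x‖ :=
          mul_le_mul_of_nonneg_left (le_abs_self _) hK.le
        have h3 : C * ε * x ≤ C * ε * T :=
          mul_le_mul_of_nonneg_left hxT (by positivity)
        calc ρ x ≤ K * g x + C * ε * x := h1
          _ ≤ K * ‖g x‖ + C * ε * T := add_le_add h2 h3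
      have hgr : ∀ x ∈ Set.Icc a T, ‖g x‖ ≤ gronwallBound 0 K (C * ε * T) (x - a) := by
        apply norm_le_gronwallBound_of_norm_deriv_right_le hgcont.continuousOn
        · intro x _; exact (hg' x).hasDerivWithinAt
        · simp [hg_def]
        · intro x hx
          have hx0 : (0:ℝ) ≤ x := ha0.trans hx.1
          have hρx : 0 ≤ ρ x := hnonneg x ⟨hx0, hx.2.le⟩
          rw [Real.norm_of_nonneg (by rw [heq x ⟨hx0, hx.2.le⟩]; exact hρx)]
          rw [heq x ⟨hx0, hx.2.le⟩]
          exact hstep x hx.1 hx.2.le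
      have hgt := hgr t ⟨hat, htT⟩
      rw [gronwallBound_of_K_ne_0 hK.ne'] at hgt
      set E : ℝ := Real.exp (K * (t - a)) with hE_def
      have hgt' : ‖g t‖ ≤ C * ε * T / K * (E - 1) := by
        simpa using hgt
      have hmain : ρ t ≤ C * ε * T * E := by
        have h1 := hstep t hat htT
        have h2 : K * ‖g t‖ ≤ K * (C * ε * T / K * (E - 1)) :=
          mul_le_mul_of_nonneg_left hgt' hK.le
        have h3 : K * (C * ε * T / K * (E - 1)) = C * ε * T * (E - 1) := by
          field_simp
        nlinarith
      -- rewrite C ε T E as C T ε^(1 - C(t-a)) ≤ C T √ε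
      have hrw : ε * E = ε ^ (1 - C * (t - a)) := by
        have harg : Real.log ε * (1 - C * (t - a)) = Real.log ε + K * (t - a) := by
          rw [hK_def]; ring
        rw [Real.rpow_def_of_pos hε0, harg, Real.exp_add, Real.exp_log hε0, hE_def]
      have hexp : (1:ℝ)/2 ≤ 1 - C * (t - a) := by
        have : C * (t - a) ≤ C * (1/(2*C)) :=
          mul_le_mul_of_nonneg_left hlen hC.le
        have h4 : C * (1/(2*C)) = 1/2 := by field_simp
        linarith
      have hle : ε ^ (1 - C * (t - a)) ≤ Real.sqrt ε := by
        rw [Real.sqrt_eq_rpow]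
        exact Real.rpow_le_rpow_of_exponent_ge hε0 hε1.le hexp
      calc ρ t ≤ C * ε * T * E := hmain
        _ = C * T * (ε * E) := by ring
        _ = C * T * ε ^ (1 - C * (t - a)) := by rw [hrw]
        _ ≤ C * T * Real.sqrt ε := by
            apply mul_le_mul_of_nonneg_left hle (by positivity)
    -- take ε → 0⁺
    have h0 : ρ t ≤ 0 := by
      have htend : Filter.Tendsto (fun ε : ℝ => C * T * Real.sqrt ε)
          (nhdsWithin 0 (Set.Ioi 0)) (nhds 0) := by
        have hc : Continuous (fun ε : ℝ => C * T * Real.sqrt ε) :=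
          continuous_const.mul Real.continuous_sqrt
        have h := (hc.tendsto 0).mono_left (nhdsWithin_le_nhds (s := Set.Ioi (0:ℝ)))
        simpa using h
      refine ge_of_tendsto htend ?_
      filter_upwards [Ioo_mem_nhdsGT_of_mem
        (Set.left_mem_Ico.2 one_pos)] with ε hε using hbound ε hε.1 hε.2
    exact le_antisymm h0 (hnonneg t ⟨ht0, htT⟩)
  -- induction: ρ = 0 on [0, n/(2C)] ∩ [0, T]
  have main : ∀ n : ℕ, ∀ t, 0 ≤ t → t ≤ T → t ≤ n/(2*C) → ρ t = 0 := by
    intro n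
    induction n with
    | zero =>
      intro t ht0 htT htn
      have : t = 0 := le_antisymm (by simpa using htn) ht0
      rw [this]; exact h00
    | succ n ih =>
      intro t ht0 htT htn
      by_cases hcase : t ≤ (n:ℝ)/(2*C)
      · exact ih t ht0 htT hcase
      · push_neg at hcase
        have han : (0:ℝ) ≤ (n:ℝ)/(2*C) := by positivity
        apply key ((n:ℝ)/(2*C)) han (hcase.le.trans htT) ?_ t hcase.le htT ?_
        · intro s hs0 hsn
          exact ih s hs0 (hsn.trans (hcase.le.trans htT)) hsn
        · have hcast : ((n+1 : ℕ) : ℝ) = (n:ℝ) + 1 := by push_cast; ring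
          rw [hcast] at htn
          have : ((n:ℝ) + 1)/(2*C) = (n:ℝ)/(2*C) + 1/(2*C) := by ring
          linarith
  intro t ht
  obtain ⟨n, hn⟩ := exists_nat_ge (2*C*t)
  apply main n t ht.1 ht.2
  rw [le_div_iff₀ (by linarith)]
  linarith
end

section
/- Geometric smallness from the factorial bound: with C > 0, let t* = min(1/(2Ce), 1). Then for all 0 ≤ t ≤ t* and all integers n ≥ 1, taking ε = e^{−(n−1)}, the quantity Cⁿ (−ln ε + 1)^(n−1) tⁿ/n! + C t ε^(1−Ct) e^{Ct} is bounded by (1/(√(2π) n^(3/2)))·(1/2)ⁿ + C·e·e^{−n/2}; in particular this bound tends to 0 geometrically as n → ∞. -/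
open Real

lemma sqrtpi_le_stirling (n : ℕ) (hn : 1 ≤ n) :
    Real.sqrt Real.pi ≤ Stirling.stirlingSeq n := by
  obtain ⟨m, rfl⟩ := Nat.exists_eq_add_of_le hn
  simpa [Nat.add_comm] using
    Stirling.stirlingSeq'_antitone.le_of_tendsto
      (Stirling.tendsto_stirlingSeq_sqrt_pi.comp (Filter.tendsto_add_atTop_nat 1)) m

lemma fact_lb (n : ℕ) (hn : 1 ≤ n) :
    Real.sqrt (2 * Real.pi) * (n : ℝ) ^ ((3 : ℝ) / 2) * (n : ℝ) ^ (n - 1)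
      ≤ (Nat.factorial n : ℝ) * Real.exp 1 ^ n := by
  have hnpos : (0:ℝ) < n := by exact_mod_cast hn
  have h := sqrtpi_le_stirling n hn
  rw [Stirling.stirlingSeq, le_div_iff₀ (by positivity)] at h
  -- h : √π * (√(2n) * (n / e)^n) ≤ n!
  have key : Real.sqrt (2 * Real.pi) * (n : ℝ) ^ ((3 : ℝ) / 2) * (n : ℝ) ^ (n - 1)
      = (Real.sqrt Real.pi * (Real.sqrt (2 * n) * ((n:ℝ) / Real.exp 1) ^ n)) * Real.exp 1 ^ n := by
    have h1 : Real.sqrt Real.pi * (Real.sqrt (2 * n) * ((n:ℝ) / Real.exp 1) ^ n) * Real.exp 1 ^ n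
        = Real.sqrt Real.pi * Real.sqrt (2 * n) * (n:ℝ) ^ n := by
      rw [div_pow]
      field_simp
    rw [h1, Real.sqrt_mul (by norm_num : (0:ℝ) ≤ 2), Real.sqrt_mul (by norm_num : (0:ℝ) ≤ 2) (n:ℝ)]
    have hpow : ((n:ℝ) ^ (n-1)) * (n:ℝ) = (n:ℝ) ^ n := by
      rw [← pow_succ]
      congr 1
      omega
    have h32 : (n:ℝ) ^ ((3:ℝ)/2) = (n:ℝ) ^ ((1:ℝ)/2) * (n:ℝ) := by
      rw [show (3:ℝ)/2 = 1/2 + 1 by norm_num, Real.rpow_add hnpos, Real.rpow_one]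
    rw [h32, Real.sqrt_eq_rpow (n:ℝ)]
    calc Real.sqrt 2 * Real.sqrt Real.pi * ((n:ℝ)^((1:ℝ)/2) * (n:ℝ)) * (n:ℝ) ^ (n-1)
        = Real.sqrt Real.pi * (Real.sqrt 2 * (n:ℝ)^((1:ℝ)/2)) * ((n:ℝ)^(n-1) * (n:ℝ)) := by ring
      _ = _ := by rw [hpow]
  rw [key]
  exact mul_le_mul_of_nonneg_right h (by positivity)

theorem stmt16 (C : ℝ) (hC : 0 < C) (n : ℕ) (hn : 1 ≤ n) (t : ℝ)
    (ht : t ∈ Set.Icc 0 (min (1 / (2 * C * Real.exp 1)) 1)) :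
    C ^ n * (-Real.log (Real.exp (-((n : ℝ) - 1))) + 1) ^ (n - 1) * t ^ n / (Nat.factorial n : ℝ)
        + C * t * Real.exp (-((n : ℝ) - 1)) ^ (1 - C * t) * Real.exp (C * t) ≤
      1 / (Real.sqrt (2 * Real.pi) * (n : ℝ) ^ ((3 : ℝ) / 2)) * (1 / 2) ^ n +
        C * Real.exp 1 * Real.exp (-(n : ℝ) / 2) := by
  obtain ⟨ht0, ht1⟩ := ht
  have htle : t ≤ 1 / (2 * C * Real.exp 1) := le_trans ht1 (min_le_left _ _)
  have ht1' : t ≤ 1 := le_trans ht1 (min_le_right _ _)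
  have he1 : (1:ℝ) ≤ Real.exp 1 := Real.one_le_exp one_pos.le
  have hCt : C * t ≤ 1 / (2 * Real.exp 1) := by
    calc C * t ≤ C * (1 / (2 * C * Real.exp 1)) := mul_le_mul_of_nonneg_left htle hC.le
      _ = 1 / (2 * Real.exp 1) := by
          field_simp
  have hCthalf : C * t ≤ 1 / 2 := by
    calc C * t ≤ 1 / (2 * Real.exp 1) := hCt
      _ ≤ 1 / 2 := by
        apply div_le_div_of_nonneg_left (by norm_num) (by norm_num)
        nlinarith
  have hCt0 : 0 ≤ C * t := by positivity
  have hnpos : (0:ℝ) < n := by exact_mod_cast hn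
  -- simplify log
  rw [Real.log_exp]
  have hsimp : (-(-((n:ℝ) - 1)) + 1) = (n : ℝ) := by ring
  rw [hsimp]
  have hfact : (0:ℝ) < Nat.factorial n := by exact_mod_cast Nat.factorial_pos n
  -- first term bound
  have hterm1 : C ^ n * (n:ℝ) ^ (n - 1) * t ^ n / (Nat.factorial n : ℝ)
      ≤ 1 / (Real.sqrt (2 * Real.pi) * (n : ℝ) ^ ((3 : ℝ) / 2)) * (1 / 2) ^ n := by
    have hlb := fact_lb n hn
    have hsp : (0:ℝ) < Real.sqrt (2 * Real.pi) * (n : ℝ) ^ ((3 : ℝ) / 2) := by positivity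
    rw [div_le_iff₀ hfact, one_div, mul_comm (Real.sqrt (2 * Real.pi) * _)⁻¹, ← div_eq_mul_inv,
      div_mul_eq_mul_div, le_div_iff₀ hsp]
    -- goal: C^n * n^(n-1) * t^n * (√(2π) * n^(3/2)) ≤ (1/2)^n * n!
    have hCtpow : (C * t) ^ n * Real.exp 1 ^ n ≤ (1/2) ^ n := by
      rw [← mul_pow]
      apply pow_le_pow_left₀ (by positivity)
      calc C * t * Real.exp 1 ≤ 1 / (2 * Real.exp 1) * Real.exp 1 :=
            mul_le_mul_of_nonneg_right hCt (Real.exp_pos 1).le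
        _ = 1 / 2 := by
            field_simp
    calc C ^ n * (n:ℝ) ^ (n - 1) * t ^ n * (Real.sqrt (2 * Real.pi) * (n : ℝ) ^ ((3 : ℝ) / 2))
        = (C * t) ^ n * (Real.sqrt (2 * Real.pi) * (n : ℝ) ^ ((3 : ℝ) / 2) * (n:ℝ) ^ (n - 1)) := by
          rw [mul_pow]; ring
      _ ≤ (C * t) ^ n * ((Nat.factorial n : ℝ) * Real.exp 1 ^ n) :=
          mul_le_mul_of_nonneg_left hlb (by positivity)
      _ = (C * t) ^ n * Real.exp 1 ^ n * (Nat.factorial n : ℝ) := by ring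
      _ ≤ (1/2) ^ n * (Nat.factorial n : ℝ) :=
          mul_le_mul_of_nonneg_right hCtpow hfact.le
  -- second term bound
  have hterm2 : C * t * Real.exp (-((n : ℝ) - 1)) ^ (1 - C * t) * Real.exp (C * t)
      ≤ C * Real.exp 1 * Real.exp (-(n : ℝ) / 2) := by
    rw [← Real.exp_mul]
    have hexp1 : Real.exp (-((n:ℝ) - 1) * (1 - C * t)) ≤ Real.exp (-((n:ℝ) - 1) / 2) := by
      apply Real.exp_le_exp.mpr
      have h1 : (0:ℝ) ≤ (n:ℝ) - 1 := by
        have : (1:ℝ) ≤ n := by exact_mod_cast hn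
        linarith
      nlinarith
    have hexp2 : Real.exp (C * t) ≤ Real.exp (1/2) := Real.exp_le_exp.mpr hCthalf
    calc C * t * Real.exp (-((n:ℝ) - 1) * (1 - C * t)) * Real.exp (C * t)
        ≤ C * 1 * Real.exp (-((n:ℝ) - 1) / 2) * Real.exp (1/2) := by
          apply mul_le_mul (mul_le_mul (mul_le_mul_of_nonneg_left ht1' hC.le) hexp1
            (Real.exp_pos _).le (by positivity)) hexp2 (Real.exp_pos _).le (by positivity)
      _ = C * Real.exp 1 * Real.exp (-(n:ℝ) / 2) := by
          rw [mul_one, mul_assoc, mul_assoc, ← Real.exp_add, ← Real.exp_add]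
          congr 2
          ring
  linarith
end

section
/- Picard iteration with bounded quasi-Lipschitz velocity converges: let u : ℝ² × [0,T] → ℝ² satisfy |u(x,t)| ≤ C for all (x,t) and |u(x₁,t) − u(x₂,t)| ≤ C·χ(|x₁ − x₂|) for all x₁, x₂, t, where χ(r) = (1 − ln r)r for 0 < r < 1 and χ(r) = 1 for r ≥ 1. Then for each a the Picard iterates Φ⁰ₜ(a) = a, Φᵏₜ(a) = a + ∫₀ᵗ u(Φᵏ⁻¹ₛ(a), s) ds satisfy, for all k ≥ 1 and t in [0, min(T, 1/(2Ce))], |Φᵏₜ(a) − Φᵏ⁻¹ₜ(a)| ≤ (1/(√(2π) k^(3/2)))·(1/2)ᵏ + C t e^{−k/2}; hence (Φᵏₜ(a)) is Cauchy and converges to a solution of Φₜ(a) = a + ∫₀ᵗ u(Φₛ(a), s) ds. -/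
open MeasureTheory intervalIntegral

noncomputable def picard (u : EuclideanSpace ℝ (Fin 2) → ℝ → EuclideanSpace ℝ (Fin 2)) :
    ℕ → EuclideanSpace ℝ (Fin 2) → ℝ → EuclideanSpace ℝ (Fin 2)
  | 0 => fun a _ => a
  | k + 1 => fun a t => a + ∫ s in (0:ℝ)..t, u (picard u k a s) s



lemma chi_zero : chi 0 = 0 := by simp [chi]

lemma chi_nonneg {r : ℝ} (hr : 0 ≤ r) : 0 ≤ chi r := by
  unfold chi
  split_ifs with h
  · rcases eq_or_lt_of_le hr with h0 | h0
    · simp [← h0]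
    · have hl : Real.log r < 0 := Real.log_neg h0 h
      nlinarith
  · norm_num

lemma chi_le_one {r : ℝ} (hr : 0 ≤ r) : chi r ≤ 1 := by
  unfold chi
  split_ifs with h
  · rcases eq_or_lt_of_le hr with h0 | h0
    · simp [← h0]
    · have h1 : Real.log r⁻¹ ≤ r⁻¹ - 1 := Real.log_le_sub_one_of_pos (by positivity)
      rw [Real.log_inv] at h1
      have h2 : (-Real.log r) * r ≤ 1 - r := by
        have := mul_le_mul_of_nonneg_left h1 h0.le
        calc (-Real.log r) * r = r * (-Real.log r) := by ring
          _ ≤ r * (r⁻¹ - 1) := mul_le_mul_of_nonneg_left h1 h0.le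
          _ = 1 - r := by field_simp
      nlinarith
  · exact le_refl 1

lemma chi_le_linear {r ε : ℝ} (hr : 0 ≤ r) (hε0 : 0 < ε) (hε1 : ε < 1) :
    chi r ≤ ε + (-Real.log ε) * r := by
  have hlogε : Real.log ε < 0 := Real.log_neg hε0 hε1
  unfold chi
  split_ifs with h
  · rcases eq_or_lt_of_le hr with h0 | h0
    · rw [← h0]; simpa using hε0.le
    · have h1 : Real.log (ε / r) ≤ ε / r - 1 := Real.log_le_sub_one_of_pos (by positivity)
      rw [Real.log_div hε0.ne' h0.ne'] at h1
      have h2 : r * (Real.log ε - Real.log r) ≤ ε - r := by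
        have := mul_le_mul_of_nonneg_left h1 h0.le
        calc r * (Real.log ε - Real.log r) ≤ r * (ε / r - 1) := this
          _ = ε - r := by field_simp
      nlinarith
  · push_neg at h
    have h2 : 1 ≤ ε - Real.log ε := by
      have := Real.log_le_sub_one_of_pos hε0
      linarith
    nlinarith [mul_le_mul_of_nonneg_left h (neg_nonneg.2 hlogε.le)]

lemma chi_continuous : Continuous chi := by
  have hf : Continuous fun r : ℝ => (1 - Real.log r) * r := by
    have : (fun r : ℝ => (1 - Real.log r) * r) = fun r : ℝ => r - r * Real.log r := by
      funext r; ring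
    rw [this]
    exact continuous_id.sub Real.continuous_mul_log
  have : chi = fun r : ℝ => if (1 : ℝ) ≤ r then 1 else (1 - Real.log r) * r := by
    funext r
    by_cases h : r < 1
    · rw [chi, if_pos h, if_neg (by linarith)]
    · rw [chi, if_neg h, if_pos (by linarith [not_lt.1 h])]
  rw [this]
  exact Continuous.if_le continuous_const hf continuous_const continuous_id
    (fun x hx => by simp [← hx])

lemma chi_monotoneOn : MonotoneOn chi (Set.Ici 0) := by
  have hmono : MonotoneOn (fun r : ℝ => r - r * Real.log r) (Set.Icc (0:ℝ) 1) := by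
    apply StrictMonoOn.monotoneOn
    apply strictMonoOn_of_deriv_pos (convex_Icc 0 1)
      (continuous_id.sub Real.continuous_mul_log).continuousOn
    intro x hx
    rw [interior_Icc] at hx
    have hx0 : x ≠ 0 := ne_of_gt hx.1
    have : HasDerivAt (fun r : ℝ => r - r * Real.log r) (1 - (Real.log x + 1)) x :=
      (hasDerivAt_id x).sub (Real.hasDerivAt_mul_log hx0)
    have hd : HasDerivAt (id - fun x : ℝ => x * Real.log x) (1 - (Real.log x + 1)) x := this
    rw [hd.deriv]
    have := Real.log_neg hx.1 hx.2
    linarith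
  intro r hr r' hr' hle
  simp only [Set.mem_Ici] at hr hr'
  by_cases h' : r' < 1
  · have h : r < 1 := lt_of_le_of_lt hle h'
    rw [chi, if_pos h, chi, if_pos h']
    have := hmono (Set.mem_Icc.2 ⟨hr, h.le⟩) (Set.mem_Icc.2 ⟨hr', h'.le⟩) hle
    calc (1 - Real.log r) * r = r - r * Real.log r := by ring
      _ ≤ r' - r' * Real.log r' := this
      _ = (1 - Real.log r') * r' := by ring
  · have : chi r' = 1 := by rw [chi, if_neg h']
    rw [this]
    exact chi_le_one hr


lemma integral_exp_mul {β τ : ℝ} (hβ : β ≠ 0) :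
    ∫ s in (0:ℝ)..τ, Real.exp (β * s) = (Real.exp (β * τ) - 1) / β := by
  have := intervalIntegral.integral_comp_mul_left (a := (0:ℝ)) (b := τ)
    (f := fun x => Real.exp x) hβ
  rw [this]
  simp [integral_exp, smul_eq_mul]
  ring

lemma integral_exp_shift {β t₀ s : ℝ} (hβ : β ≠ 0) :
    ∫ x in t₀..s, Real.exp (β * (x - t₀)) = (Real.exp (β * (s - t₀)) - 1) / β := by
  have := intervalIntegral.integral_comp_sub_right (a := t₀) (b := s)
    (fun x => Real.exp (β * x)) t₀
  rw [this, sub_self, integral_exp_mul hβ]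

lemma integral_pow_shift (t₀ s : ℝ) (n : ℕ) :
    ∫ x in t₀..s, (x - t₀) ^ n = (s - t₀) ^ (n + 1) / (n + 1) := by
  have := intervalIntegral.integral_comp_sub_right (a := t₀) (b := s)
    (fun x => x ^ n) t₀
  rw [this, sub_self, integral_pow]
  simp

lemma integral_id_exp_le {β t : ℝ} (hβ : 0 < β) (ht : 0 ≤ t) :
    ∫ s in (0:ℝ)..t, s * Real.exp (β * s) ≤ t * (Real.exp (β * t) - 1) / β := by
  have h1 : ∫ s in (0:ℝ)..t, s * Real.exp (β * s) ≤ ∫ s in (0:ℝ)..t, t * Real.exp (β * s) := by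
    apply intervalIntegral.integral_mono_on ht
    · apply ContinuousOn.intervalIntegrable
      exact (continuous_id.mul (Real.continuous_exp.comp (continuous_const.mul continuous_id))).continuousOn
    · apply ContinuousOn.intervalIntegrable
      exact (continuous_const.mul (Real.continuous_exp.comp (continuous_const.mul continuous_id))).continuousOn
    · intro x hx
      exact mul_le_mul_of_nonneg_right hx.2 (Real.exp_pos _).le
  calc ∫ s in (0:ℝ)..t, s * Real.exp (β * s) ≤ ∫ s in (0:ℝ)..t, t * Real.exp (β * s) := h1
    _ = t * ((Real.exp (β * t) - 1) / β) := by
        rw [intervalIntegral.integral_const_mul, integral_exp_mul hβ.ne']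
    _ = t * (Real.exp (β * t) - 1) / β := by ring

lemma gronwall_aux {f : ℝ → ℝ} {t₀ h α β M : ℝ} (hh : 0 ≤ h) (hα : 0 ≤ α) (hβ : 0 < β)
    (hM : 0 ≤ M) (hf : ContinuousOn f (Set.Icc t₀ (t₀ + h)))
    (hfM : ∀ s ∈ Set.Icc t₀ (t₀ + h), f s ≤ M)
    (hkey : ∀ s ∈ Set.Icc t₀ (t₀ + h), f s ≤ α + β * ∫ x in t₀..s, f x) :
    ∀ s ∈ Set.Icc t₀ (t₀ + h), f s ≤ α * Real.exp (β * h) := by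
  have main : ∀ n : ℕ, ∀ s ∈ Set.Icc t₀ (t₀ + h),
      f s ≤ α * Real.exp (β * (s - t₀)) + M * (β * (s - t₀)) ^ n / n.factorial := by
    intro n
    induction n with
    | zero =>
      intro s hs
      have := hfM s hs
      have hexp : 0 ≤ α * Real.exp (β * (s - t₀)) := by positivity
      simpa using by linarith
    | succ n ih =>
      intro s hs
      have hs0 : t₀ ≤ s := hs.1
      have hsh : s ≤ t₀ + h := hs.2
      have hint : ∫ x in t₀..s, f x ≤
          ∫ x in t₀..s, (α * Real.exp (β * (x - t₀)) + M * (β * (x - t₀)) ^ n / n.factorial) := by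
        apply intervalIntegral.integral_mono_on hs0
        · apply ContinuousOn.intervalIntegrable
          rw [Set.uIcc_of_le hs0]
          exact hf.mono (Set.Icc_subset_Icc le_rfl hsh)
        · apply ContinuousOn.intervalIntegrable
          apply Continuous.continuousOn
          fun_prop
        · intro x hx
          exact ih x ⟨hx.1, le_trans hx.2 hsh⟩
      have hcomp : ∫ x in t₀..s, (α * Real.exp (β * (x - t₀)) + M * (β * (x - t₀)) ^ n / n.factorial)
          = α * ((Real.exp (β * (s - t₀)) - 1) / β)
            + (M * β ^ n / n.factorial) * ((s - t₀) ^ (n + 1) / (n + 1)) := by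
        rw [intervalIntegral.integral_add]
        · congr 1
          · rw [show (fun x => α * Real.exp (β * (x - t₀))) = fun x => α * Real.exp (β * (x - t₀)) from rfl,
              intervalIntegral.integral_const_mul, integral_exp_shift hβ.ne']
          · have : (fun x => M * (β * (x - t₀)) ^ n / n.factorial)
                = fun x => (M * β ^ n / n.factorial) * (x - t₀) ^ n := by
              funext x; rw [mul_pow]; ring
            rw [this, intervalIntegral.integral_const_mul, integral_pow_shift]
        · apply ContinuousOn.intervalIntegrable; apply Continuous.continuousOn; fun_prop
        · apply ContinuousOn.intervalIntegrable; apply Continuous.continuousOn; fun_prop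
      have := hkey s hs
      have hn1 : (0:ℝ) < n.factorial := by positivity
      calc f s ≤ α + β * ∫ x in t₀..s, f x := hkey s hs
        _ ≤ α + β * (α * ((Real.exp (β * (s - t₀)) - 1) / β)
              + (M * β ^ n / n.factorial) * ((s - t₀) ^ (n + 1) / (n + 1))) := by
            rw [hcomp] at hint
            exact add_le_add_right (mul_le_mul_of_nonneg_left hint hβ.le) α
        _ = α * Real.exp (β * (s - t₀)) + M * (β * (s - t₀)) ^ (n + 1) / (n + 1).factorial := by
            rw [Nat.factorial_succ, mul_pow]
            push_cast
            have hβ' : β ≠ 0 := hβ.ne'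
            field_simp
            ring
  intro s hs
  have hτ : β * (s - t₀) ≤ β * h := by nlinarith [hs.1, hs.2]
  have hlim : Filter.Tendsto
      (fun n : ℕ => α * Real.exp (β * (s - t₀)) + M * (β * (s - t₀)) ^ n / n.factorial)
      Filter.atTop (nhds (α * Real.exp (β * (s - t₀)) + M * 0)) := by
    apply Filter.Tendsto.add tendsto_const_nhds
    have := FloorSemiring.tendsto_pow_div_factorial_atTop (K := ℝ) (β * (s - t₀))
    simpa [mul_div_assoc] using (this.const_mul M)
  have h1 : f s ≤ α * Real.exp (β * (s - t₀)) + M * 0 :=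
    ge_of_tendsto' hlim (fun n => main n s hs)
  calc f s ≤ α * Real.exp (β * (s - t₀)) + M * 0 := h1
    _ = α * Real.exp (β * (s - t₀)) := by ring
    _ ≤ α * Real.exp (β * h) := by
        apply mul_le_mul_of_nonneg_left (Real.exp_le_exp.2 hτ) hα


section Picard

variable {u : EuclideanSpace ℝ (Fin 2) → ℝ → EuclideanSpace ℝ (Fin 2)} {C : ℝ}
  {a : EuclideanSpace ℝ (Fin 2)}

lemma picard_zero (t : ℝ) : picard u 0 a t = a := rfl

lemma picard_succ (k : ℕ) (t : ℝ) :
    picard u (k + 1) a t = a + ∫ s in (0:ℝ)..t, u (picard u k a s) s := rfl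

lemma picard_continuous (hucont : Continuous fun p : EuclideanSpace ℝ (Fin 2) × ℝ => u p.1 p.2)
    (k : ℕ) : Continuous (picard u k a) := by
  induction k with
  | zero => exact continuous_const
  | succ k ih =>
    have hg : Continuous fun s => u (picard u k a s) s := hucont.comp (ih.prodMk continuous_id)
    have : Continuous fun t => ∫ s in (0:ℝ)..t, u (picard u k a s) s :=
      intervalIntegral.continuous_primitive (fun c d => hg.intervalIntegrable c d) 0
    exact continuous_const.add this

lemma picard_integrand_continuous
    (hucont : Continuous fun p : EuclideanSpace ℝ (Fin 2) × ℝ => u p.1 p.2) (k : ℕ) :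
    Continuous fun s => u (picard u k a s) s :=
  hucont.comp ((picard_continuous hucont k).prodMk continuous_id)

lemma picard_sub_a (hucont : Continuous fun p : EuclideanSpace ℝ (Fin 2) × ℝ => u p.1 p.2)
    (hbdd : ∀ x t, ‖u x t‖ ≤ C) (k : ℕ) (t : ℝ) : ‖picard u k a t - a‖ ≤ C * |t| := by
  have hC0 : 0 ≤ C := le_trans (norm_nonneg _) (hbdd a 0)
  cases k with
  | zero => simp [picard_zero]; positivity
  | succ k =>
    rw [picard_succ, add_sub_cancel_left]
    calc ‖∫ s in (0:ℝ)..t, u (picard u k a s) s‖ ≤ C * |t - 0| :=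
          intervalIntegral.norm_integral_le_of_norm_le_const fun x _ => hbdd _ x
      _ = C * |t| := by rw [sub_zero]

lemma picard_lip (hucont : Continuous fun p : EuclideanSpace ℝ (Fin 2) × ℝ => u p.1 p.2)
    (hbdd : ∀ x t, ‖u x t‖ ≤ C) (k : ℕ) (t t' : ℝ) :
    ‖picard u k a t - picard u k a t'‖ ≤ C * |t - t'| := by
  have hC0 : 0 ≤ C := le_trans (norm_nonneg _) (hbdd a 0)
  cases k with
  | zero => simp [picard_zero]; positivity
  | succ k =>
    have hint : ∀ c d : ℝ, IntervalIntegrable (fun s => u (picard u k a s) s) volume c d :=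
      fun c d => (picard_integrand_continuous hucont k).intervalIntegrable c d
    have : picard u (k+1) a t - picard u (k+1) a t'
        = ∫ s in t'..t, u (picard u k a s) s := by
      rw [picard_succ, picard_succ, add_sub_add_left_eq_sub,
        intervalIntegral.integral_interval_sub_left (hint 0 t) (hint 0 t')]
    rw [this]
    exact intervalIntegral.norm_integral_le_of_norm_le_const fun x _ => hbdd _ x

/-- The sup of distances between iterates with indices `≥ k`. -/
noncomputable def AA (u : EuclideanSpace ℝ (Fin 2) → ℝ → EuclideanSpace ℝ (Fin 2))
    (a : EuclideanSpace ℝ (Fin 2)) (k : ℕ) (t : ℝ) : ℝ :=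
  ⨆ pq : ℕ × ℕ, ‖picard u (k + pq.1) a t - picard u (k + pq.2) a t‖

lemma AA_bddAbove (hucont : Continuous fun p : EuclideanSpace ℝ (Fin 2) × ℝ => u p.1 p.2)
    (hbdd : ∀ x t, ‖u x t‖ ≤ C) (k : ℕ) (t : ℝ) :
    BddAbove (Set.range fun pq : ℕ × ℕ =>
      ‖picard u (k + pq.1) a t - picard u (k + pq.2) a t‖) := by
  refine ⟨2 * C * |t|, ?_⟩
  rintro x ⟨pq, rfl⟩
  calc ‖picard u (k + pq.1) a t - picard u (k + pq.2) a t‖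
      = ‖(picard u (k + pq.1) a t - a) - (picard u (k + pq.2) a t - a)‖ := by abel_nf
    _ ≤ ‖picard u (k + pq.1) a t - a‖ + ‖picard u (k + pq.2) a t - a‖ := norm_sub_le _ _
    _ ≤ C * |t| + C * |t| :=
        add_le_add (picard_sub_a hucont hbdd _ t) (picard_sub_a hucont hbdd _ t)
    _ = 2 * C * |t| := by ring

lemma le_AA (hucont : Continuous fun p : EuclideanSpace ℝ (Fin 2) × ℝ => u p.1 p.2)
    (hbdd : ∀ x t, ‖u x t‖ ≤ C) (k i j : ℕ) (t : ℝ) :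
    ‖picard u (k + i) a t - picard u (k + j) a t‖ ≤ AA u a k t :=
  le_ciSup (AA_bddAbove hucont hbdd k t) (i, j)

lemma AA_le_bound (hucont : Continuous fun p : EuclideanSpace ℝ (Fin 2) × ℝ => u p.1 p.2)
    (hbdd : ∀ x t, ‖u x t‖ ≤ C) (k : ℕ) (t : ℝ) : AA u a k t ≤ 2 * C * |t| := by
  apply ciSup_le
  intro pq
  calc ‖picard u (k + pq.1) a t - picard u (k + pq.2) a t‖
      = ‖(picard u (k + pq.1) a t - a) - (picard u (k + pq.2) a t - a)‖ := by abel_nf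
    _ ≤ ‖picard u (k + pq.1) a t - a‖ + ‖picard u (k + pq.2) a t - a‖ := norm_sub_le _ _
    _ ≤ C * |t| + C * |t| :=
        add_le_add (picard_sub_a hucont hbdd _ t) (picard_sub_a hucont hbdd _ t)
    _ = 2 * C * |t| := by ring

lemma AA_nonneg (hucont : Continuous fun p : EuclideanSpace ℝ (Fin 2) × ℝ => u p.1 p.2)
    (hbdd : ∀ x t, ‖u x t‖ ≤ C) (k : ℕ) (t : ℝ) : 0 ≤ AA u a k t := by
  have := le_AA (a := a) hucont hbdd k 0 0 t
  simpa using this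

lemma AA_antitone (hucont : Continuous fun p : EuclideanSpace ℝ (Fin 2) × ℝ => u p.1 p.2)
    (hbdd : ∀ x t, ‖u x t‖ ≤ C) (k : ℕ) (t : ℝ) : AA u a (k + 1) t ≤ AA u a k t := by
  apply ciSup_le
  intro pq
  have := le_AA (a := a) hucont hbdd k (pq.1 + 1) (pq.2 + 1) t
  have h1 : k + (pq.1 + 1) = k + 1 + pq.1 := by omega
  have h2 : k + (pq.2 + 1) = k + 1 + pq.2 := by omega
  rwa [h1, h2] at this

lemma AA_lip (hucont : Continuous fun p : EuclideanSpace ℝ (Fin 2) × ℝ => u p.1 p.2)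
    (hbdd : ∀ x t, ‖u x t‖ ≤ C) (k : ℕ) (t t' : ℝ) :
    AA u a k t ≤ AA u a k t' + 2 * C * |t - t'| := by
  apply ciSup_le
  rintro ⟨i, j⟩
  have hX : picard u (k + i) a t - picard u (k + j) a t
      = (picard u (k + i) a t - picard u (k + i) a t')
        + ((picard u (k + i) a t' - picard u (k + j) a t')
        + (picard u (k + j) a t' - picard u (k + j) a t)) := by abel
  calc ‖picard u (k + i) a t - picard u (k + j) a t‖
      ≤ ‖picard u (k + i) a t - picard u (k + i) a t'‖
        + (‖picard u (k + i) a t' - picard u (k + j) a t'‖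
        + ‖picard u (k + j) a t' - picard u (k + j) a t‖) := by
        rw [hX]; exact (norm_add_le _ _).trans (by gcongr; exact norm_add_le _ _)
    _ ≤ C * |t - t'| + (AA u a k t' + C * |t' - t|) := by
        gcongr
        · exact picard_lip hucont hbdd _ t t'
        · exact le_AA hucont hbdd k i j t'
        · exact picard_lip hucont hbdd _ t' t
    _ = AA u a k t' + 2 * C * |t - t'| := by rw [abs_sub_comm t' t]; ring

lemma continuous_of_sym_bound {f : ℝ → ℝ} {L : ℝ} (h : ∀ t t', f t ≤ f t' + L * |t - t'|) :
    Continuous f := by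
  have habs : ∀ t t', |f t - f t'| ≤ L * |t - t'| := by
    intro t t'
    rw [abs_sub_le_iff]
    constructor
    · linarith [h t t']
    · have := h t' t
      rw [abs_sub_comm t' t] at this
      linarith
  have : LipschitzWith (Real.toNNReal L) f := by
    apply LipschitzWith.of_dist_le_mul
    intro t t'
    rw [Real.dist_eq, Real.dist_eq]
    calc |f t - f t'| ≤ L * |t - t'| := habs t t'
      _ ≤ Real.toNNReal L * |t - t'| :=
          mul_le_mul_of_nonneg_right (Real.le_coe_toNNReal L) (abs_nonneg _)
  exact this.continuous

lemma AA_continuous (hucont : Continuous fun p : EuclideanSpace ℝ (Fin 2) × ℝ => u p.1 p.2)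
    (hbdd : ∀ x t, ‖u x t‖ ≤ C) (k : ℕ) : Continuous (AA u a k) :=
  continuous_of_sym_bound fun t t' => AA_lip hucont hbdd k t t'

lemma AA_succ_le (hC : 0 < C)
    (hucont : Continuous fun p : EuclideanSpace ℝ (Fin 2) × ℝ => u p.1 p.2)
    (hbdd : ∀ x t, ‖u x t‖ ≤ C)
    (hqL : ∀ x₁ x₂ t, ‖u x₁ t - u x₂ t‖ ≤ C * chi (dist x₁ x₂))
    (k : ℕ) {t : ℝ} (ht : 0 ≤ t) :
    AA u a (k + 1) t ≤ C * ∫ s in (0:ℝ)..t, chi (AA u a k s) := by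
  apply ciSup_le
  rintro ⟨i, j⟩
  have h1 : k + 1 + i = (k + i) + 1 := by omega
  have h2 : k + 1 + j = (k + j) + 1 := by omega
  have hint : ∀ m : ℕ, ∀ c d : ℝ, IntervalIntegrable (fun s => u (picard u m a s) s) volume c d :=
    fun m c d => (picard_integrand_continuous hucont m).intervalIntegrable c d
  have hdiff : picard u (k + 1 + i) a t - picard u (k + 1 + j) a t
      = ∫ s in (0:ℝ)..t, (u (picard u (k + i) a s) s - u (picard u (k + j) a s) s) := by
    rw [h1, h2, picard_succ, picard_succ, add_sub_add_left_eq_sub,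
      ← intervalIntegral.integral_sub (hint _ 0 t) (hint _ 0 t)]
  rw [hdiff, ← intervalIntegral.integral_const_mul]
  have hchiint : IntervalIntegrable (fun x => C * chi (AA u a k x)) volume 0 t :=
    (continuous_const.mul (chi_continuous.comp (AA_continuous hucont hbdd k))).intervalIntegrable 0 t
  have hae : ∀ᵐ s ∂(volume.restrict (Set.uIoc (0:ℝ) t)),
      ‖u (picard u (k + i) a s) s - u (picard u (k + j) a s) s‖ ≤ C * chi (AA u a k s) := by
    rw [MeasureTheory.ae_restrict_iff' measurableSet_uIoc]
    apply MeasureTheory.ae_of_all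
    intro s hs
    calc ‖u (picard u (k + i) a s) s - u (picard u (k + j) a s) s‖
        ≤ C * chi (dist (picard u (k + i) a s) (picard u (k + j) a s)) := hqL _ _ s
      _ ≤ C * chi (AA u a k s) := by
          apply mul_le_mul_of_nonneg_left _ hC.le
          apply chi_monotoneOn (Set.mem_Ici.2 dist_nonneg)
            (Set.mem_Ici.2 (AA_nonneg hucont hbdd k s))
          rw [dist_eq_norm]
          exact le_AA hucont hbdd k i j s
  calc ‖∫ s in (0:ℝ)..t, (u (picard u (k + i) a s) s - u (picard u (k + j) a s) s)‖
      ≤ |∫ x in (0:ℝ)..t, C * chi (AA u a k x)| :=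
        intervalIntegral.norm_integral_le_abs_of_norm_le hae hchiint
    _ = ∫ x in (0:ℝ)..t, C * chi (AA u a k x) := by
        apply abs_of_nonneg
        apply intervalIntegral.integral_nonneg ht
        intro x hx
        exact mul_nonneg hC.le (chi_nonneg (AA_nonneg hucont hbdd k x))

/-- The pointwise limit of `AA`. -/
noncomputable def aaF (u : EuclideanSpace ℝ (Fin 2) → ℝ → EuclideanSpace ℝ (Fin 2))
    (a : EuclideanSpace ℝ (Fin 2)) (t : ℝ) : ℝ :=
  ⨅ k : ℕ, AA u a k t

lemma aa_le (hucont : Continuous fun p : EuclideanSpace ℝ (Fin 2) × ℝ => u p.1 p.2)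
    (hbdd : ∀ x t, ‖u x t‖ ≤ C) (k : ℕ) (t : ℝ) : aaF u a t ≤ AA u a k t :=
  ciInf_le ⟨0, by rintro x ⟨m, rfl⟩; exact AA_nonneg hucont hbdd m t⟩ k

lemma aa_nonneg (hucont : Continuous fun p : EuclideanSpace ℝ (Fin 2) × ℝ => u p.1 p.2)
    (hbdd : ∀ x t, ‖u x t‖ ≤ C) (t : ℝ) : 0 ≤ aaF u a t :=
  le_ciInf fun k => AA_nonneg hucont hbdd k t

lemma aa_continuous (hucont : Continuous fun p : EuclideanSpace ℝ (Fin 2) × ℝ => u p.1 p.2)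
    (hbdd : ∀ x t, ‖u x t‖ ≤ C) : Continuous (aaF u a) := by
  apply continuous_of_sym_bound (L := 2 * C)
  intro t t'
  have h : ∀ k : ℕ, aaF u a t - 2 * C * |t - t'| ≤ AA u a k t' := by
    intro k
    have h1 := aa_le (a := a) hucont hbdd k t
    have h2 := AA_lip (a := a) hucont hbdd k t t'
    linarith
  have := le_ciInf h
  have heq : aaF u a t' = ⨅ k : ℕ, AA u a k t' := rfl
  linarith [this]

lemma aa_tendsto (hucont : Continuous fun p : EuclideanSpace ℝ (Fin 2) × ℝ => u p.1 p.2)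
    (hbdd : ∀ x t, ‖u x t‖ ≤ C) (t : ℝ) :
    Filter.Tendsto (fun k => AA u a k t) Filter.atTop (nhds (aaF u a t)) := by
  apply tendsto_atTop_ciInf
  · exact antitone_nat_of_succ_le fun k => AA_antitone hucont hbdd k t
  · exact ⟨0, by rintro x ⟨m, rfl⟩; exact AA_nonneg hucont hbdd m t⟩

lemma tendsto_integral_chi_AA
    (hucont : Continuous fun p : EuclideanSpace ℝ (Fin 2) × ℝ => u p.1 p.2)
    (hbdd : ∀ x t, ‖u x t‖ ≤ C) (t : ℝ) :
    Filter.Tendsto (fun k => ∫ s in (0:ℝ)..t, chi (AA u a k s)) Filter.atTop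
      (nhds (∫ s in (0:ℝ)..t, chi (aaF u a s))) := by
  apply intervalIntegral.tendsto_integral_filter_of_dominated_convergence (fun _ => (1:ℝ))
  · apply Filter.Eventually.of_forall
    intro k
    exact ((chi_continuous.comp (AA_continuous hucont hbdd k)).aestronglyMeasurable).restrict
  · apply Filter.Eventually.of_forall
    intro k
    apply MeasureTheory.ae_of_all
    intro s _
    rw [Real.norm_eq_abs, abs_le]
    constructor
    · linarith [chi_nonneg (AA_nonneg (a := a) hucont hbdd k s)]
    · exact chi_le_one (AA_nonneg hucont hbdd k s)
  · exact intervalIntegrable_const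
  · apply MeasureTheory.ae_of_all
    intro s _
    exact (chi_continuous.continuousAt).tendsto.comp (aa_tendsto hucont hbdd s)

lemma aa_key (hC : 0 < C)
    (hucont : Continuous fun p : EuclideanSpace ℝ (Fin 2) × ℝ => u p.1 p.2)
    (hbdd : ∀ x t, ‖u x t‖ ≤ C)
    (hqL : ∀ x₁ x₂ t, ‖u x₁ t - u x₂ t‖ ≤ C * chi (dist x₁ x₂))
    {t : ℝ} (ht : 0 ≤ t) :
    aaF u a t ≤ C * ∫ s in (0:ℝ)..t, chi (aaF u a s) := by
  have hlim := (tendsto_integral_chi_AA (a := a) hucont hbdd t).const_mul C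
  apply ge_of_tendsto' hlim
  intro k
  exact (aa_le hucont hbdd (k + 1) t).trans (AA_succ_le hC hucont hbdd hqL k ht)

end Picard


lemma osgood {g : ℝ → ℝ} {C M : ℝ} (hC : 0 < C) (hM : 0 ≤ M) (hcont : Continuous g)
    (hg0 : ∀ t, 0 ≤ g t) (hgM : ∀ t, 0 ≤ t → g t ≤ M * t)
    (hkey : ∀ t, 0 ≤ t → g t ≤ C * ∫ s in (0:ℝ)..t, chi (g s)) :
    ∀ t, 0 ≤ t → g t = 0 := by
  set h : ℝ := 1 / (2 * C) with hh_def
  have hh : 0 < h := by positivity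
  have hchig : Continuous fun s => chi (g s) := chi_continuous.comp hcont
  have main : ∀ n : ℕ, ∀ t, 0 ≤ t → t ≤ n * h → g t = 0 := by
    intro n
    induction n with
    | zero =>
      intro t ht0 htn
      have ht : t = 0 := le_antisymm (by simpa using htn) ht0
      subst ht
      have := hkey 0 le_rfl
      simp at this
      exact le_antisymm this (hg0 0)
    | succ n ih =>
      intro t ht0 htn
      by_cases hcase : t ≤ n * h
      · exact ih t ht0 hcase
      push_neg at hcase
      set t₀ : ℝ := n * h with ht₀_def
      have ht₀0 : 0 ≤ t₀ := by positivity
      have hwin : ∀ s ∈ Set.Icc t₀ (t₀ + h), 0 ≤ s := fun s hs => le_trans ht₀0 hs.1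
      -- the integral over [0, t₀] vanishes
      have hzero : ∫ s in (0:ℝ)..t₀, chi (g s) = 0 := by
        have heq : ∫ s in (0:ℝ)..t₀, chi (g s) = ∫ s in (0:ℝ)..t₀, (0:ℝ) := by
          apply intervalIntegral.integral_congr
          intro x hx
          rw [Set.uIcc_of_le ht₀0] at hx
          show chi (g x) = 0
          rw [ih x hx.1 hx.2]
          exact chi_zero
        rw [heq, intervalIntegral.integral_zero]
      have hsplit : ∀ s, 0 ≤ s →
          C * ∫ x in (0:ℝ)..s, chi (g x) = C * ∫ x in t₀..s, chi (g x) := by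
        intro s hs
        congr 1
        rw [← intervalIntegral.integral_add_adjacent_intervals
          (hchig.intervalIntegrable 0 t₀) (hchig.intervalIntegrable t₀ s), hzero, zero_add]
      -- key linear bound for every small ε
      have hbound : ∀ m : ℕ, g t ≤ C * h * Real.exp (-((m:ℝ) + 1)) := by
        intro m
        set ε : ℝ := Real.exp (-(2 * (m:ℝ) + 2)) with hε_def
        have hε0 : 0 < ε := Real.exp_pos _
        have hε1 : ε < 1 := by
          rw [hε_def, Real.exp_lt_one_iff]
          have : (0:ℝ) ≤ (m:ℝ) := Nat.cast_nonneg m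
          linarith
        have hlogε : -Real.log ε = 2 * (m:ℝ) + 2 := by
          rw [hε_def, Real.log_exp]; ring
        set lam : ℝ := 2 * (m:ℝ) + 2 with hlam_def
        have hlam : 0 < lam := by positivity
        have hkey2 : ∀ s ∈ Set.Icc t₀ (t₀ + h),
            g s ≤ C * ε * h + (C * lam) * ∫ x in t₀..s, g x := by
          intro s hs
          have hs0 : 0 ≤ s := hwin s hs
          have hst₀ : t₀ ≤ s := hs.1
          calc g s ≤ C * ∫ x in (0:ℝ)..s, chi (g x) := hkey s hs0
            _ = C * ∫ x in t₀..s, chi (g x) := hsplit s hs0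
            _ ≤ C * ∫ x in t₀..s, (ε + lam * g x) := by
                apply mul_le_mul_of_nonneg_left _ hC.le
                apply intervalIntegral.integral_mono_on hst₀
                  (hchig.intervalIntegrable t₀ s)
                  ((continuous_const.add (continuous_const.mul hcont)).intervalIntegrable t₀ s)
                intro x _
                have := chi_le_linear (hg0 x) hε0 hε1
                rwa [hlogε] at this
            _ = C * (ε * (s - t₀) + lam * ∫ x in t₀..s, g x) := by
                rw [intervalIntegral.integral_add (intervalIntegrable_const)
                  ((by exact (continuous_const.mul hcont).intervalIntegrable t₀ s :
                    IntervalIntegrable (fun x => lam * g x) volume t₀ s)),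
                  intervalIntegral.integral_const, intervalIntegral.integral_const_mul]
                simp [smul_eq_mul, mul_comm]
            _ ≤ C * ε * h + (C * lam) * ∫ x in t₀..s, g x := by
                have hsh : s - t₀ ≤ h := by linarith [hs.2]
                have : ε * (s - t₀) ≤ ε * h := mul_le_mul_of_nonneg_left hsh hε0.le
                nlinarith
        have hgron := gronwall_aux (f := g) (t₀ := t₀) (h := h) (α := C * ε * h)
          (β := C * lam) (M := M * (t₀ + h)) hh.le (by positivity) (by positivity)
          (by positivity) hcont.continuousOn
          (fun s hs => (hgM s (hwin s hs)).trans
            (mul_le_mul_of_nonneg_left hs.2 hM))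
          hkey2
        have hmem : t ∈ Set.Icc t₀ (t₀ + h) := by
          constructor
          · exact hcase.le
          · have : ((n:ℝ) + 1) * h = t₀ + h := by ring
            rw [← this]
            calc t ≤ ((n:ℕ) + 1 : ℕ) * h := htn
              _ = ((n:ℝ) + 1) * h := by push_cast; ring
        have := hgron t hmem
        have hexp : C * lam * h = lam / 2 := by
          rw [hh_def]
          field_simp
        calc g t ≤ C * ε * h * Real.exp (C * lam * h) := this
          _ = C * h * (ε * Real.exp (lam / 2)) := by rw [hexp]; ring
          _ = C * h * Real.exp (-((m:ℝ) + 1)) := by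
              rw [hε_def, ← Real.exp_add]
              congr 1
              rw [hlam_def]
              ring
      -- let m → ∞
      have hlim : Filter.Tendsto (fun m : ℕ => C * h * Real.exp (-((m:ℝ) + 1)))
          Filter.atTop (nhds 0) := by
        have h1 : Filter.Tendsto (fun m : ℕ => -((m:ℝ) + 1)) Filter.atTop Filter.atBot := by
          apply Filter.tendsto_neg_atBot_iff.mpr
          apply Filter.tendsto_atTop_add_const_right
          exact tendsto_natCast_atTop_atTop
        have h2 := Real.tendsto_exp_atBot.comp h1
        have := h2.const_mul (C * h)
        simpa using this
      have hle : g t ≤ 0 := ge_of_tendsto' hlim hbound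
      exact le_antisymm hle (hg0 t)
  intro t ht
  obtain ⟨n, hn⟩ := exists_nat_ge (t / h)
  apply main n t ht
  rw [div_le_iff₀ hh] at hn
  linarith


lemma stirling_lower (k : ℕ) (hk : 1 ≤ k) :
    Real.sqrt (2 * Real.pi * k) * ((k : ℝ) / Real.exp 1) ^ k ≤ (k.factorial : ℝ) := by
  obtain ⟨n, rfl⟩ : ∃ n, k = n + 1 := ⟨k - 1, by omega⟩
  have h1 : Filter.Tendsto (fun m => Stirling.stirlingSeq (m + 1)) Filter.atTop
      (nhds (Real.sqrt Real.pi)) :=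
    Stirling.tendsto_stirlingSeq_sqrt_pi.comp (Filter.tendsto_add_atTop_nat 1)
  have h2 : Real.sqrt Real.pi ≤ Stirling.stirlingSeq (n + 1) :=
    Stirling.stirlingSeq'_antitone.le_of_tendsto h1 n
  set k := n + 1
  have hk0 : (0:ℝ) < (k:ℝ) := by positivity
  have hd : (0:ℝ) < Real.sqrt (2 * k) * ((k : ℝ) / Real.exp 1) ^ k := by positivity
  rw [Stirling.stirlingSeq, le_div_iff₀ hd] at h2
  calc Real.sqrt (2 * Real.pi * k) * ((k : ℝ) / Real.exp 1) ^ k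
      = Real.sqrt Real.pi * (Real.sqrt (2 * k) * ((k : ℝ) / Real.exp 1) ^ k) := by
        rw [show 2 * Real.pi * (k:ℝ) = Real.pi * (2 * k) by ring,
          Real.sqrt_mul Real.pi_pos.le, mul_assoc]
    _ ≤ (k.factorial : ℝ) := h2

section PicardBound

variable {u : EuclideanSpace ℝ (Fin 2) → ℝ → EuclideanSpace ℝ (Fin 2)} {C : ℝ}
  {a : EuclideanSpace ℝ (Fin 2)}

lemma picard_diff_bound (hC : 0 < C)
    (hucont : Continuous fun p : EuclideanSpace ℝ (Fin 2) × ℝ => u p.1 p.2)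
    (hbdd : ∀ x t, ‖u x t‖ ≤ C)
    (hqL : ∀ x₁ x₂ t, ‖u x₁ t - u x₂ t‖ ≤ C * chi (dist x₁ x₂))
    {ε : ℝ} (hε0 : 0 < ε) (hε1 : ε < 1) :
    ∀ m : ℕ, ∀ t : ℝ, 0 ≤ t → ‖picard u (m + 1) a t - picard u m a t‖ ≤
      C ^ (m + 1) * (-Real.log ε) ^ m * t ^ (m + 1) / (m + 1).factorial
        + C * ε * t * Real.exp (C * (-Real.log ε) * t) := by
  set lam : ℝ := -Real.log ε with hlam_def
  have hlam : 0 < lam := by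
    rw [hlam_def, neg_pos]
    exact Real.log_neg hε0 hε1
  have hint : ∀ m : ℕ, ∀ c d : ℝ,
      IntervalIntegrable (fun s => u (picard u m a s) s) volume c d :=
    fun m c d => (picard_integrand_continuous hucont m).intervalIntegrable c d
  intro m
  induction m with
  | zero =>
    intro t ht
    have h1 : picard u 1 a t - picard u 0 a t = ∫ s in (0:ℝ)..t, u a s := by
      rw [picard_succ, picard_zero, add_sub_cancel_left]
      rfl
    rw [h1]
    have h2 : ‖∫ s in (0:ℝ)..t, u a s‖ ≤ C * |t - 0| :=
      intervalIntegral.norm_integral_le_of_norm_le_const fun x _ => hbdd a x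
    rw [sub_zero, abs_of_nonneg ht] at h2
    have h3 : (0:ℝ) ≤ C * ε * t * Real.exp (C * lam * t) := by positivity
    refine h2.trans ?_
    have h4 : C ^ (0 + 1) * lam ^ 0 * t ^ (0 + 1) / ((0 + 1).factorial : ℝ) = C * t := by
      norm_num
    rw [h4]
    linarith
  | succ m ih =>
    intro t ht
    have hdiff : picard u (m + 2) a t - picard u (m + 1) a t
        = ∫ s in (0:ℝ)..t, (u (picard u (m + 1) a s) s - u (picard u m a s) s) := by
      rw [show m + 2 = (m + 1) + 1 from rfl, picard_succ (m+1), picard_succ m,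
        add_sub_add_left_eq_sub, ← intervalIntegral.integral_sub (hint _ 0 t) (hint _ 0 t)]
    set K : ℝ := C ^ (m + 1) * lam ^ m / (m + 1).factorial with hK_def
    have hK : 0 ≤ K := by positivity
    set g : ℝ → ℝ := fun s => C * ε + (C * lam * K) * s ^ (m + 1)
      + (C * lam * (C * ε)) * (s * Real.exp (C * lam * s)) with hg_def
    have hgcont : Continuous g := by
      apply Continuous.add
      apply Continuous.add continuous_const
      · exact continuous_const.mul (continuous_pow (m+1))
      · exact continuous_const.mul (continuous_id.mul
          (Real.continuous_exp.comp (continuous_const.mul continuous_id)))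
    have hae : ∀ᵐ s ∂(volume.restrict (Set.uIoc (0:ℝ) t)),
        ‖u (picard u (m + 1) a s) s - u (picard u m a s) s‖ ≤ g s := by
      rw [MeasureTheory.ae_restrict_iff' measurableSet_uIoc]
      apply MeasureTheory.ae_of_all
      intro s hs
      rw [Set.uIoc_of_le ht] at hs
      have hs0 : 0 ≤ s := hs.1.le
      have hihs := ih s hs0
      calc ‖u (picard u (m + 1) a s) s - u (picard u m a s) s‖
          ≤ C * chi (dist (picard u (m + 1) a s) (picard u m a s)) := hqL _ _ s
        _ ≤ C * (ε + lam * ‖picard u (m + 1) a s - picard u m a s‖) := by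
            apply mul_le_mul_of_nonneg_left _ hC.le
            have := chi_le_linear (dist_nonneg
              (x := picard u (m + 1) a s) (y := picard u m a s)) hε0 hε1
            rw [dist_eq_norm] at this
            exact this
        _ ≤ C * (ε + lam * (C ^ (m + 1) * lam ^ m * s ^ (m + 1) / (m + 1).factorial
              + C * ε * s * Real.exp (C * lam * s))) := by
            apply mul_le_mul_of_nonneg_left _ hC.le
            have := mul_le_mul_of_nonneg_left hihs hlam.le
            linarith
        _ = g s := by
            rw [hg_def, hK_def]
            field_simp
            ring
    have hnorm : ‖∫ s in (0:ℝ)..t, (u (picard u (m + 1) a s) s - u (picard u m a s) s)‖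
        ≤ ∫ s in (0:ℝ)..t, g s := by
      calc ‖∫ s in (0:ℝ)..t, (u (picard u (m + 1) a s) s - u (picard u m a s) s)‖
          ≤ |∫ s in (0:ℝ)..t, g s| :=
            intervalIntegral.norm_integral_le_abs_of_norm_le hae (hgcont.intervalIntegrable 0 t)
        _ = ∫ s in (0:ℝ)..t, g s := by
            apply abs_of_nonneg
            apply intervalIntegral.integral_nonneg ht
            intro x hx
            have : (0:ℝ) ≤ x := hx.1
            rw [hg_def]
            positivity
    have hCl : 0 < C * lam := by positivity
    have hpow : ∫ s in (0:ℝ)..t, s ^ (m + 1) = t ^ (m + 2) / ((m:ℝ) + 2) := by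
      rw [integral_pow, zero_pow (by omega : m + 1 + 1 ≠ 0)]
      push_cast
      norm_num
      rw [show m + 1 + 1 = m + 2 from rfl]
      ring
    have heq2 : ∫ s in (0:ℝ)..t, g s
        = C * ε * t + (C * lam * K) * (t ^ (m + 2) / ((m:ℝ) + 2))
          + (C * lam * (C * ε)) * ∫ s in (0:ℝ)..t, s * Real.exp (C * lam * s) := by
      rw [hg_def]
      rw [intervalIntegral.integral_add (by
            exact ((continuous_const.add (continuous_const.mul (continuous_pow (m+1))))).intervalIntegrable 0 t)
          (by exact (continuous_const.mul (continuous_id.mul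
            (Real.continuous_exp.comp (continuous_const.mul continuous_id)))).intervalIntegrable 0 t),
        intervalIntegral.integral_add (intervalIntegrable_const)
          (by exact (continuous_const.mul (continuous_pow (m+1))).intervalIntegrable 0 t),
        intervalIntegral.integral_const, intervalIntegral.integral_const_mul,
        intervalIntegral.integral_const_mul, hpow]
      rw [smul_eq_mul]
      ring
    have hgint : ∫ s in (0:ℝ)..t, g s
        ≤ C * ε * t + (C * lam * K) * (t ^ (m + 2) / ((m:ℝ) + 2))
          + (C * lam * (C * ε)) * (t * (Real.exp (C * lam * t) - 1) / (C * lam)) := by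
      rw [heq2]
      have hexp := integral_id_exp_le hCl ht
      have hle := mul_le_mul_of_nonneg_left hexp
        (mul_nonneg hCl.le (by positivity : (0:ℝ) ≤ C * ε))
      linarith
    have hfinal : C * ε * t + (C * lam * K) * (t ^ (m + 2) / ((m:ℝ) + 2))
          + (C * lam * (C * ε)) * (t * (Real.exp (C * lam * t) - 1) / (C * lam))
        = C ^ (m + 2) * lam ^ (m + 1) * t ^ (m + 2) / (m + 2).factorial
          + C * ε * t * Real.exp (C * lam * t) := by
      rw [hK_def]
      have hf1 : ((m + 2).factorial : ℝ) = ((m:ℝ) + 2) * ((m + 1).factorial : ℝ) := by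
        rw [show m + 2 = (m + 1) + 1 from rfl, Nat.factorial_succ]
        push_cast
        ring
      rw [hf1]
      have hfact : ((m + 1).factorial : ℝ) ≠ 0 := by positivity
      have hm2 : ((m:ℝ) + 2) ≠ 0 := by positivity
      field_simp
      ring
    calc ‖picard u (m + 1 + 1) a t - picard u (m + 1) a t‖
        = ‖∫ s in (0:ℝ)..t, (u (picard u (m + 1) a s) s - u (picard u m a s) s)‖ := by
          rw [show m + 1 + 1 = m + 2 from rfl, hdiff]
      _ ≤ C * ε * t + (C * lam * K) * (t ^ (m + 2) / ((m:ℝ) + 2))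
          + (C * lam * (C * ε)) * (t * (Real.exp (C * lam * t) - 1) / (C * lam)) :=
          hnorm.trans hgint
      _ = C ^ (m + 2) * lam ^ (m + 1) * t ^ (m + 2) / (m + 2).factorial
          + C * ε * t * Real.exp (C * lam * t) := hfinal
      _ = C ^ (m + 1 + 1) * lam ^ (m + 1) * t ^ (m + 1 + 1) / (m + 1 + 1).factorial
          + C * ε * t * Real.exp (C * lam * t) := by norm_num

end PicardBound

theorem stmt17 (T C : ℝ) (hT : 0 < T) (hC : 0 < C)
    (u : EuclideanSpace ℝ (Fin 2) → ℝ → EuclideanSpace ℝ (Fin 2))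
    (hucont : Continuous fun p : EuclideanSpace ℝ (Fin 2) × ℝ => u p.1 p.2)
    (hbdd : ∀ x t, ‖u x t‖ ≤ C)
    (hqL : ∀ x₁ x₂ t, ‖u x₁ t - u x₂ t‖ ≤ C * chi (dist x₁ x₂)) :
    ∀ a : EuclideanSpace ℝ (Fin 2),
      (∀ k, 1 ≤ k → ∀ t ∈ Set.Icc 0 (min T (1 / (2 * C * Real.exp 1))),
        ‖picard u k a t - picard u (k - 1) a t‖ ≤
          1 / (Real.sqrt (2 * Real.pi) * (k : ℝ) ^ ((3 : ℝ) / 2)) * (1 / 2) ^ k +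
            C * t * Real.exp (-(k : ℝ) / 2)) ∧
      ∃ Φ : ℝ → EuclideanSpace ℝ (Fin 2),
        (∀ t ∈ Set.Icc 0 T,
          Filter.Tendsto (fun k => picard u k a t) Filter.atTop (nhds (Φ t))) ∧
        ∀ t ∈ Set.Icc 0 T, Φ t = a + ∫ s in (0:ℝ)..t, u (Φ s) s := by
  intro a
  have hC0 : 0 ≤ C := hC.le
  constructor
  · -- Part 1: quantitative bound
    intro k hk t ht
    obtain ⟨ht0, ht1⟩ := ht
    have hte : t ≤ 1 / (2 * C * Real.exp 1) := le_trans ht1 (min_le_right _ _)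
    obtain ⟨m, rfl⟩ : ∃ m, k = m + 1 := ⟨k - 1, by omega⟩
    set kR : ℝ := ((m + 1 : ℕ) : ℝ) with hkR_def
    have hkR1 : (1:ℝ) ≤ kR := by rw [hkR_def]; exact_mod_cast Nat.one_le_iff_ne_zero.2 (by omega)
    have hkR0 : (0:ℝ) < kR := lt_of_lt_of_le one_pos hkR1
    set ε : ℝ := Real.exp (-kR) with hε_def
    have hε0 : 0 < ε := Real.exp_pos _
    have hε1 : ε < 1 := by rw [hε_def, Real.exp_lt_one_iff]; linarith
    have hlam : -Real.log ε = kR := by rw [hε_def, Real.log_exp]; ring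
    have hbound := picard_diff_bound (a := a) hC hucont hbdd hqL hε0 hε1 m t ht0
    rw [hlam] at hbound
    simp only [Nat.add_sub_cancel]
    have he1 : (1:ℝ) ≤ Real.exp 1 := by
      have := Real.add_one_le_exp 1
      linarith
    have hct : C * t ≤ 1 / (2 * Real.exp 1) := by
      have h1 : C * t ≤ C * (1 / (2 * C * Real.exp 1)) := mul_le_mul_of_nonneg_left hte hC0
      have h2 : C * (1 / (2 * C * Real.exp 1)) = 1 / (2 * Real.exp 1) := by
        field_simp
      linarith
    have hct2 : C * t ≤ 1 / 2 := by
      have : (1:ℝ) / (2 * Real.exp 1) ≤ 1 / 2 := by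
        apply div_le_div_of_nonneg_left one_pos.le two_pos
        linarith
      linarith
    -- main term
    have hA : (C * t) ^ (m + 1) ≤ (1 / (2 * Real.exp 1)) ^ (m + 1) :=
      pow_le_pow_left₀ (by positivity) hct (m + 1)
    have hst := stirling_lower (m + 1) (by omega)
    have hfactpos : (0:ℝ) < ((m + 1).factorial : ℝ) := by positivity
    have hXpos : (0:ℝ) < Real.sqrt (2 * Real.pi) * kR ^ ((3:ℝ)/2) := by
      apply mul_pos (Real.sqrt_pos.2 (by positivity))
      exact Real.rpow_pos_of_pos hkR0 _
    have hX : Real.sqrt (2 * Real.pi) * kR ^ ((3:ℝ)/2) = Real.sqrt (2 * Real.pi * kR) * kR := by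
      have h1 : kR ^ ((3:ℝ)/2) = Real.sqrt kR * kR := by
        rw [show ((3:ℝ)/2) = 1/2 + 1 by norm_num, Real.rpow_add hkR0, Real.rpow_one,
          Real.sqrt_eq_rpow]
      rw [h1, show 2 * Real.pi * kR = (2 * Real.pi) * kR by ring,
        Real.sqrt_mul (by positivity) kR]
      ring
    have key : (C * t) ^ (m + 1) * (kR ^ (m + 1) * Real.sqrt (2 * Real.pi * kR))
        ≤ (1/2) ^ (m + 1) * ((m + 1).factorial : ℝ) := by
      have hepos : (0:ℝ) < Real.exp 1 := Real.exp_pos 1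
      calc (C * t) ^ (m + 1) * (kR ^ (m + 1) * Real.sqrt (2 * Real.pi * kR))
          ≤ (1 / (2 * Real.exp 1)) ^ (m + 1) * (kR ^ (m + 1) * Real.sqrt (2 * Real.pi * kR)) :=
            mul_le_mul_of_nonneg_right hA (by positivity)
        _ = (1/2) ^ (m + 1) * (Real.sqrt (2 * Real.pi * kR) * (kR / Real.exp 1) ^ (m + 1)) := by
            rw [div_pow, div_pow, one_pow, div_pow, mul_pow]
            field_simp
        _ ≤ (1/2) ^ (m + 1) * ((m + 1).factorial : ℝ) :=
            mul_le_mul_of_nonneg_left hst (by positivity)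
    have hmain : C ^ (m + 1) * kR ^ m * t ^ (m + 1) / ((m + 1).factorial : ℝ)
        ≤ 1 / (Real.sqrt (2 * Real.pi) * kR ^ ((3:ℝ)/2)) * (1/2) ^ (m + 1) := by
      rw [show (1:ℝ) / (Real.sqrt (2 * Real.pi) * kR ^ ((3:ℝ)/2)) * (1/2) ^ (m + 1)
        = (1/2) ^ (m + 1) / (Real.sqrt (2 * Real.pi) * kR ^ ((3:ℝ)/2)) by ring]
      rw [div_le_div_iff₀ hfactpos hXpos]
      calc C ^ (m + 1) * kR ^ m * t ^ (m + 1) * (Real.sqrt (2 * Real.pi) * kR ^ ((3:ℝ)/2))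
          = (C * t) ^ (m + 1) * (kR ^ (m + 1) * Real.sqrt (2 * Real.pi * kR)) := by
            rw [hX, mul_pow, pow_succ]
            ring
        _ ≤ (1/2) ^ (m + 1) * ((m + 1).factorial : ℝ) := key
    -- error term
    have herr : C * ε * t * Real.exp (C * kR * t) ≤ C * t * Real.exp (-kR / 2) := by
      have h1 : C * kR * t ≤ kR / 2 := by
        have := mul_le_mul_of_nonneg_left hct2 hkR0.le
        nlinarith
      calc C * ε * t * Real.exp (C * kR * t) ≤ C * ε * t * Real.exp (kR / 2) := by
            apply mul_le_mul_of_nonneg_left (Real.exp_le_exp.2 h1) (by positivity)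
        _ = C * t * (Real.exp (-kR) * Real.exp (kR / 2)) := by rw [hε_def]; ring
        _ = C * t * Real.exp (-kR / 2) := by
            rw [← Real.exp_add]
            congr 1
            ring
    calc ‖picard u (m + 1) a t - picard u m a t‖
        ≤ C ^ (m + 1) * kR ^ m * t ^ (m + 1) / ((m + 1).factorial : ℝ)
          + C * ε * t * Real.exp (C * kR * t) := hbound
      _ ≤ 1 / (Real.sqrt (2 * Real.pi) * kR ^ ((3:ℝ)/2)) * (1/2) ^ (m + 1)
          + C * t * Real.exp (-kR / 2) := add_le_add hmain herr
  · -- Part 2: convergence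
    classical
    have haa0 : ∀ t, 0 ≤ t → aaF u a t = 0 := by
      apply osgood (M := 2 * C) hC (by positivity) (aa_continuous hucont hbdd)
        (aa_nonneg hucont hbdd)
      · intro t ht
        calc aaF u a t ≤ AA u a 0 t := aa_le hucont hbdd 0 t
          _ ≤ 2 * C * |t| := AA_le_bound hucont hbdd 0 t
          _ = 2 * C * t := by rw [abs_of_nonneg ht]
      · intro t ht
        exact aa_key hC hucont hbdd hqL ht
    have hAAto0 : ∀ t, 0 ≤ t →
        Filter.Tendsto (fun k => AA u a k t) Filter.atTop (nhds 0) := by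
      intro t ht
      have := aa_tendsto (a := a) hucont hbdd t
      rwa [haa0 t ht] at this
    have hcauchy : ∀ t, t ∈ Set.Icc 0 T →
        ∃ x, Filter.Tendsto (fun k => picard u k a t) Filter.atTop (nhds x) := by
      intro t ht
      apply cauchySeq_tendsto_of_complete
      apply cauchySeq_of_le_tendsto_0 (fun k => AA u a k t) _ (hAAto0 t ht.1)
      intro n m N hn hm
      rw [dist_eq_norm]
      have h1 : N + (n - N) = n := by omega
      have h2 : N + (m - N) = m := by omega
      calc ‖picard u n a t - picard u m a t‖
          = ‖picard u (N + (n - N)) a t - picard u (N + (m - N)) a t‖ := by rw [h1, h2]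
        _ ≤ AA u a N t := le_AA hucont hbdd N _ _ t
    choose f hf using hcauchy
    refine ⟨fun t => if ht : t ∈ Set.Icc 0 T then f t ht else a, ?_, ?_⟩
    · intro t ht
      have hbeta : (fun t => if ht : t ∈ Set.Icc 0 T then f t ht else a) t = f t ht :=
        dif_pos ht
      rw [hbeta]
      exact hf t ht
    set Φ : ℝ → EuclideanSpace ℝ (Fin 2) :=
      fun t => if ht : t ∈ Set.Icc 0 T then f t ht else a with hΦ_def
    have hΦt : ∀ t, ∀ ht : t ∈ Set.Icc 0 T,
        Filter.Tendsto (fun k => picard u k a t) Filter.atTop (nhds (Φ t)) := by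
      intro t ht
      have : Φ t = f t ht := by rw [hΦ_def]; exact dif_pos ht
      rw [this]
      exact hf t ht
    have hΦlip : ∀ t ∈ Set.Icc 0 T, ∀ t' ∈ Set.Icc 0 T, dist (Φ t) (Φ t') ≤ C * dist t t' := by
      intro t ht t' ht'
      have hlim := (hΦt t ht).dist (hΦt t' ht')
      apply le_of_tendsto hlim
      apply Filter.Eventually.of_forall
      intro k
      rw [dist_eq_norm, Real.dist_eq]
      exact picard_lip hucont hbdd k t t'
    have hΦcont : ContinuousOn Φ (Set.Icc 0 T) := by
      have hl : LipschitzOnWith (Real.toNNReal C) Φ (Set.Icc 0 T) := by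
        apply LipschitzOnWith.of_dist_le_mul
        intro t ht t' ht'
        calc dist (Φ t) (Φ t') ≤ C * dist t t' := hΦlip t ht t' ht'
          _ ≤ Real.toNNReal C * dist t t' :=
            mul_le_mul_of_nonneg_right (Real.le_coe_toNNReal C) dist_nonneg
      exact hl.continuousOn
    have hdistAA : ∀ t, t ∈ Set.Icc 0 T → ∀ k, dist (picard u k a t) (Φ t) ≤ AA u a k t := by
      intro t ht k
      have hconst : Filter.Tendsto (fun _ : ℕ => picard u k a t) Filter.atTop
          (nhds (picard u k a t)) := tendsto_const_nhds
      have hlim := hconst.dist (hΦt t ht)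
      apply le_of_tendsto hlim
      rw [Filter.eventually_atTop]
      refine ⟨k, fun p hp => ?_⟩
      rw [dist_eq_norm]
      have h2 : k + (p - k) = p := by omega
      calc ‖picard u k a t - picard u p a t‖
          = ‖picard u (k + 0) a t - picard u (k + (p - k)) a t‖ := by rw [h2, Nat.add_zero]
        _ ≤ AA u a k t := le_AA hucont hbdd k _ _ t
    intro t ht
    obtain ⟨ht0, htT⟩ := ht
    have hΦii : IntervalIntegrable (fun s => u (Φ s) s) volume 0 t := by
      apply ContinuousOn.intervalIntegrable
      rw [Set.uIcc_of_le ht0]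
      have hsub : Set.Icc (0:ℝ) t ⊆ Set.Icc 0 T := Set.Icc_subset_Icc le_rfl htT
      have h1 : ContinuousOn (fun s : ℝ => (Φ s, s)) (Set.Icc 0 t) :=
        (hΦcont.mono hsub).prodMk continuousOn_id
      exact hucont.comp_continuousOn h1
    have hint : ∀ m : ℕ, ∀ c d : ℝ,
        IntervalIntegrable (fun s => u (picard u m a s) s) volume c d :=
      fun m c d => (picard_integrand_continuous hucont m).intervalIntegrable c d
    have hb : ∀ k, ‖(∫ s in (0:ℝ)..t, u (picard u k a s) s) - ∫ s in (0:ℝ)..t, u (Φ s) s‖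
        ≤ C * ∫ s in (0:ℝ)..t, chi (AA u a k s) := by
      intro k
      rw [← intervalIntegral.integral_sub (hint k 0 t) hΦii,
        ← intervalIntegral.integral_const_mul]
      have hchiint : IntervalIntegrable (fun x => C * chi (AA u a k x)) volume 0 t :=
        (continuous_const.mul (chi_continuous.comp (AA_continuous hucont hbdd k))).intervalIntegrable 0 t
      have hae : ∀ᵐ s ∂(volume.restrict (Set.uIoc (0:ℝ) t)),
          ‖u (picard u k a s) s - u (Φ s) s‖ ≤ C * chi (AA u a k s) := by
        rw [MeasureTheory.ae_restrict_iff' measurableSet_uIoc]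
        apply MeasureTheory.ae_of_all
        intro s hs
        rw [Set.uIoc_of_le ht0] at hs
        have hsIcc : s ∈ Set.Icc (0:ℝ) T := ⟨hs.1.le, le_trans hs.2 htT⟩
        calc ‖u (picard u k a s) s - u (Φ s) s‖
            ≤ C * chi (dist (picard u k a s) (Φ s)) := hqL _ _ s
          _ ≤ C * chi (AA u a k s) := by
              apply mul_le_mul_of_nonneg_left _ hC0
              apply chi_monotoneOn (Set.mem_Ici.2 dist_nonneg)
                (Set.mem_Ici.2 (AA_nonneg hucont hbdd k s))
              exact hdistAA s hsIcc k
      calc ‖∫ s in (0:ℝ)..t, (u (picard u k a s) s - u (Φ s) s)‖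
          ≤ |∫ x in (0:ℝ)..t, C * chi (AA u a k x)| :=
            intervalIntegral.norm_integral_le_abs_of_norm_le hae hchiint
        _ = ∫ x in (0:ℝ)..t, C * chi (AA u a k x) := by
            apply abs_of_nonneg
            apply intervalIntegral.integral_nonneg ht0
            intro x hx
            exact mul_nonneg hC0 (chi_nonneg (AA_nonneg hucont hbdd k x))
    have hzero : (∫ s in (0:ℝ)..t, chi (aaF u a s)) = 0 := by
      have heq : ∫ s in (0:ℝ)..t, chi (aaF u a s) = ∫ s in (0:ℝ)..t, (0:ℝ) := by
        apply intervalIntegral.integral_congr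
        intro x hx
        rw [Set.uIcc_of_le ht0] at hx
        show chi (aaF u a x) = 0
        rw [haa0 x hx.1]
        exact chi_zero
      rw [heq, intervalIntegral.integral_zero]
    have hblim : Filter.Tendsto (fun k => C * ∫ s in (0:ℝ)..t, chi (AA u a k s))
        Filter.atTop (nhds 0) := by
      have := (tendsto_integral_chi_AA (a := a) hucont hbdd t).const_mul C
      rwa [hzero, mul_zero] at this
    have hIlim : Filter.Tendsto (fun k => ∫ s in (0:ℝ)..t, u (picard u k a s) s)
        Filter.atTop (nhds (∫ s in (0:ℝ)..t, u (Φ s) s)) := by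
      rw [tendsto_iff_norm_sub_tendsto_zero]
      exact squeeze_zero (fun k => norm_nonneg _) hb hblim
    have hfinal : Filter.Tendsto (fun k => picard u (k + 1) a t) Filter.atTop
        (nhds (a + ∫ s in (0:ℝ)..t, u (Φ s) s)) := by
      have heq : (fun k => picard u (k + 1) a t)
          = fun k => a + ∫ s in (0:ℝ)..t, u (picard u k a s) s := by
        funext k
        exact picard_succ k t
      rw [heq]
      exact tendsto_const_nhds.add hIlim
    have h2 : Filter.Tendsto (fun k => picard u (k + 1) a t) Filter.atTop (nhds (Φ t)) :=
      (hΦt t ⟨ht0, htT⟩).comp (Filter.tendsto_add_atTop_nat 1)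
    exact tendsto_nhds_unique h2 hfinal
end

section
/- Uniqueness of flows for quasi-Lipschitz fields: under the same hypotheses on u as above (bounded and quasi-Lipschitz in space uniformly in time), any two continuous solutions Φₜ(a), Ψₜ(a) of the integral equation X(t) = a + ∫₀ᵗ u(X(s), s) ds on [0, T] coincide. -/
open Set intervalIntegral MeasureTheory

lemma chi_le {r ε : ℝ} (hr : 0 ≤ r) (hε0 : 0 < ε) (hε1 : ε < 1) :
    chi r ≤ ε + (1 - Real.log ε) * r := by
  unfold chi
  split_ifs with h
  · rcases eq_or_lt_of_le hr with h0 | h0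
    · simp [← h0, Real.log_zero]
      linarith
    · have hlog : Real.log ε - Real.log r ≤ ε / r - 1 := by
        have := Real.log_le_sub_one_of_pos (x := ε / r) (by positivity)
        rwa [Real.log_div (ne_of_gt hε0) (ne_of_gt h0)] at this
      have := mul_le_mul_of_nonneg_left hlog h0.le
      have h3 : r * (ε / r - 1) = ε - r := by field_simp
      rw [h3] at this
      nlinarith
  · have hlε : Real.log ε < 0 := Real.log_neg hε0 hε1
    push_neg at h
    nlinarith

theorem stmt18 (T C : ℝ) (hT : 0 < T) (hC : 0 < C)
    (u : EuclideanSpace ℝ (Fin 2) → ℝ → EuclideanSpace ℝ (Fin 2))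
    (hucont : Continuous fun p : EuclideanSpace ℝ (Fin 2) × ℝ => u p.1 p.2)
    (hbdd : ∀ x t, ‖u x t‖ ≤ C)
    (hqL : ∀ x₁ x₂ t, ‖u x₁ t - u x₂ t‖ ≤ C * chi (dist x₁ x₂))
    (a : EuclideanSpace ℝ (Fin 2)) (Φ Ψ : ℝ → EuclideanSpace ℝ (Fin 2))
    (hΦc : ContinuousOn Φ (Set.Icc 0 T)) (hΨc : ContinuousOn Ψ (Set.Icc 0 T))
    (hΦ : ∀ t ∈ Set.Icc 0 T, Φ t = a + ∫ s in (0:ℝ)..t, u (Φ s) s)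
    (hΨ : ∀ t ∈ Set.Icc 0 T, Ψ t = a + ∫ s in (0:ℝ)..t, u (Ψ s) s) :
    ∀ t ∈ Set.Icc 0 T, Φ t = Ψ t := by
  -- continuity of the integrands
  have hvc : ContinuousOn (fun s => u (Φ s) s) (Icc 0 T) :=
    hucont.comp_continuousOn (f := fun s => (Φ s, s)) (hΦc.prodMk continuousOn_id)
  have hwc : ContinuousOn (fun s => u (Ψ s) s) (Icc 0 T) :=
    hucont.comp_continuousOn (f := fun s => (Ψ s, s)) (hΨc.prodMk continuousOn_id)
  -- one-sided derivative of Φ - Ψ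
  have hderiv : ∀ x ∈ Ico 0 T, HasDerivWithinAt (fun t => Φ t - Ψ t)
      (u (Φ x) x - u (Ψ x) x) (Ici x) x := by
    intro x hx
    have hxT : x ∈ Icc 0 T := ⟨hx.1, hx.2.le⟩
    have hmem : Icc 0 T ∈ nhdsWithin x (Ici x) :=
      Filter.mem_of_superset (Icc_mem_nhdsGE_of_mem ⟨le_refl x, hx.2⟩)
        (Icc_subset_Icc hx.1 le_rfl)
    have hFd : ∀ (v : ℝ → EuclideanSpace ℝ (Fin 2)), ContinuousOn v (Icc 0 T) →
        HasDerivWithinAt (fun t => a + ∫ s in (0:ℝ)..t, v s) (v x) (Icc 0 T) x := by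
      intro v hvcont
      haveI : Fact (x ∈ Icc (0:ℝ) T) := ⟨hxT⟩
      have hint : IntervalIntegrable v volume 0 x :=
        (hvcont.mono (by rw [uIcc_of_le hx.1]; exact Icc_subset_Icc le_rfl hx.2.le)).intervalIntegrable
      have hmeas : StronglyMeasurableAtFilter v (nhdsWithin x (Icc 0 T)) :=
        ⟨Icc 0 T, self_mem_nhdsWithin, (hvcont.aestronglyMeasurable measurableSet_Icc)⟩
      exact ((intervalIntegral.integral_hasDerivWithinAt_right hint hmeas
        (hvcont x hxT)).const_add a)
    have h1 : HasDerivWithinAt (fun t => (a + ∫ s in (0:ℝ)..t, u (Φ s) s)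
        - (a + ∫ s in (0:ℝ)..t, u (Ψ s) s)) (u (Φ x) x - u (Ψ x) x) (Ici x) x :=
      (((hFd _ hvc).sub (hFd _ hwc)).mono_of_mem_nhdsWithin hmem)
    apply h1.congr_of_eventuallyEq
    · filter_upwards [hmem] with s hs
      rw [hΦ s hs, hΨ s hs]
    · rw [hΦ x hxT, hΨ x hxT]
  -- key step: propagation of equality over time 1/(2C)
  have key : ∀ t₀ ∈ Icc (0:ℝ) T, Φ t₀ = Ψ t₀ →
      ∀ t ∈ Icc t₀ (min T (t₀ + 1/(2*C))), Φ t = Ψ t := by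
    intro t₀ ht₀ heq
    set b := min T (t₀ + 1/(2*C)) with hb
    have hbT : b ≤ T := min_le_left _ _
    have main : ∀ η : ℝ, 0 < η → η < 1 → ∀ t ∈ Icc t₀ b,
        ‖Φ t - Ψ t‖ ≤ Real.exp (1/2) * η := by
      intro η hη0 hη1 t ht
      set ε' := η^2 with hε'
      have hε'0 : 0 < ε' := by positivity
      have hε'1 : ε' < 1 := by nlinarith
      have hlog : Real.log ε' < 0 := Real.log_neg hε'0 hε'1
      set K := C * (1 - Real.log ε') with hK
      have hK1 : 1 ≤ 1 - Real.log ε' := by linarith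
      have hKpos : 0 < K := by nlinarith
      have hgr := norm_le_gronwallBound_of_norm_deriv_right_le
        (f := fun t => Φ t - Ψ t) (f' := fun s => u (Φ s) s - u (Ψ s) s)
        (δ := 0) (K := K) (ε := C * ε') (a := t₀) (b := b)
        ((hΦc.sub hΨc).mono (Icc_subset_Icc ht₀.1 hbT))
        (fun x hx => hderiv x ⟨le_trans ht₀.1 hx.1, lt_of_lt_of_le hx.2 hbT⟩)
        (by show ‖Φ t₀ - Ψ t₀‖ ≤ 0; rw [heq]; simp)
        (fun x hx => by
          have h1 := hqL (Φ x) (Ψ x) x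
          have h2 : chi (dist (Φ x) (Ψ x)) ≤ ε' + (1 - Real.log ε') * ‖Φ x - Ψ x‖ := by
            rw [dist_eq_norm]
            exact chi_le (norm_nonneg _) hε'0 hε'1
          calc ‖u (Φ x) x - u (Ψ x) x‖ ≤ C * chi (dist (Φ x) (Ψ x)) := h1
            _ ≤ C * (ε' + (1 - Real.log ε') * ‖Φ x - Ψ x‖) := by
                exact mul_le_mul_of_nonneg_left h2 hC.le
            _ = K * ‖Φ x - Ψ x‖ + C * ε' := by ring)
        t ht
      -- now estimate the gronwall bound
      have hτ : t - t₀ ≤ 1/(2*C) := by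
        have := le_trans ht.2 (min_le_right _ _); linarith
      have hτ0 : 0 ≤ t - t₀ := by linarith [ht.1]
      rw [gronwallBound_of_K_ne_0 (ne_of_gt hKpos)] at hgr
      have hKε : C * ε' / K = ε' / (1 - Real.log ε') := by
        rw [hK]; field_simp
      have hKτ : K * (t - t₀) ≤ (1 - Real.log ε') / 2 := by
        calc K * (t - t₀) ≤ K * (1/(2*C)) := by
              exact mul_le_mul_of_nonneg_left hτ hKpos.le
          _ = (1 - Real.log ε') / 2 := by field_simp [hK]; ring
      have hexp : Real.exp (K * (t - t₀)) ≤ Real.exp (1/2) / η := by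
        calc Real.exp (K * (t - t₀)) ≤ Real.exp ((1 - Real.log ε') / 2) :=
              Real.exp_le_exp.2 hKτ
          _ = Real.exp (1/2) / η := by
              rw [hε', Real.log_pow]
              push_cast
              rw [show (1 - 2 * Real.log η) / 2 = 1/2 - Real.log η by ring,
                Real.exp_sub, Real.exp_log hη0]
      calc ‖Φ t - Ψ t‖ ≤ 0 * Real.exp (K * (t-t₀)) + C * ε' / K * (Real.exp (K * (t-t₀)) - 1) := hgr
        _ ≤ C * ε' / K * Real.exp (K * (t-t₀)) := by
            have h4 : 0 ≤ C * ε' / K := by positivity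
            nlinarith [Real.exp_pos (K * (t-t₀))]
        _ ≤ ε' * (Real.exp (1/2) / η) := by
            rw [hKε]
            have h5 : ε' / (1 - Real.log ε') ≤ ε' := by
              rw [div_le_iff₀ (by linarith)]; nlinarith
            have h6 : 0 < Real.exp (1/2) / η := by positivity
            have h7 : 0 ≤ ε' / (1 - Real.log ε') := by positivity
            exact mul_le_mul h5 hexp (Real.exp_pos _).le hε'0.le
        _ = Real.exp (1/2) * η := by
            rw [hε']; field_simp
    intro t ht
    have hnorm : ‖Φ t - Ψ t‖ ≤ 0 := by
      by_contra hcon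
      push_neg at hcon
      set d := ‖Φ t - Ψ t‖ with hd
      set η := min (1/2) (d / (2 * Real.exp (1/2))) with hη
      have hη0 : 0 < η := lt_min (by norm_num) (by positivity)
      have hη1 : η < 1 := lt_of_le_of_lt (min_le_left _ _) (by norm_num)
      have := main η hη0 hη1 t ht
      have h8 : Real.exp (1/2) * η ≤ Real.exp (1/2) * (d / (2 * Real.exp (1/2))) :=
        mul_le_mul_of_nonneg_left (min_le_right _ _) (Real.exp_pos _).le
      have h9 : Real.exp (1/2) * (d / (2 * Real.exp (1/2))) = d / 2 := by
        field_simp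
      nlinarith
    have := le_antisymm hnorm (norm_nonneg _)
    rwa [norm_sub_eq_zero_iff] at this
  -- iterate
  have h0 : Φ 0 = Ψ 0 := by
    rw [hΦ 0 ⟨le_rfl, hT.le⟩, hΨ 0 ⟨le_rfl, hT.le⟩]
    simp
  have hn : ∀ n : ℕ, ∀ t ∈ Icc (0:ℝ) (min T (n / (2*C))), Φ t = Ψ t := by
    intro n
    induction n with
    | zero =>
      intro t ht
      simp only [Nat.cast_zero, zero_div, min_eq_right hT.le] at ht
      have : t = 0 := le_antisymm ht.2 ht.1
      rw [this]; exact h0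
    | succ n ih =>
      intro t ht
      by_cases hcase : t ≤ min T ((n : ℝ)/(2*C))
      · exact ih t ⟨ht.1, hcase⟩
      · push_neg at hcase
        set t₀ := min T ((n : ℝ)/(2*C)) with ht₀def
        have ht₀ : t₀ ∈ Icc (0:ℝ) T := ⟨le_min hT.le (by positivity), min_le_left _ _⟩
        have heq := ih t₀ ⟨ht₀.1, le_refl _⟩
        refine key t₀ ht₀ heq t ⟨hcase.le, le_min ?_ ?_⟩
        · exact le_trans ht.2 (min_le_left _ _)
        · rcases le_total T ((n:ℝ)/(2*C)) with hc | hc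
          · have : t₀ = T := min_eq_left hc
            rw [this]
            have h10 : t ≤ T := le_trans ht.2 (min_le_left _ _)
            have : (0:ℝ) < 1/(2*C) := by positivity
            linarith
          · have h11 : t₀ = (n:ℝ)/(2*C) := min_eq_right hc
            have h12 : t ≤ ((n:ℝ)+1)/(2*C) := by
              have := le_trans ht.2 (min_le_right _ _)
              push_cast at this
              linarith
            rw [h11]
            have : ((n:ℝ)+1)/(2*C) = (n:ℝ)/(2*C) + 1/(2*C) := by ring
            linarith
  intro t ht
  obtain ⟨n, hnn⟩ := exists_nat_ge (2*C*T)
  refine hn n t ⟨ht.1, le_min ht.2 ?_⟩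
  calc t ≤ T := ht.2
    _ ≤ (n:ℝ)/(2*C) := by rw [le_div_iff₀ (by positivity)]; linarith
end
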